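/- arXiv:2603.10530 — 3 statements merged into one kernel-verified Lean document; each statement's English description precedes it below -/
import Mathlib

section
/- Let u be a smooth strictly plurisubharmonic function on an open set Ω ⊆ ℂ^n satisfying det(u_{ij̄}) = e^{(n+1)u} on Ω, and set A = (u_{ij̄}), B = (u_{ij}). Then, as an identity of n×n matrix-valued functions on Ω, u^{ij̄} ∂_i∂_{j̄} B = u^{ij̄} (∂_{j̄} B)·(Ā)⁻¹·(∂_i Ā) + (n+1)B (summation over i, j). -/
open Complex Matrix
open scoped ComplexOrder

noncomputable section

/-- Wirtinger derivative `∂/∂z_j` of a complex-valued function on `ℂⁿ`. -/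
def wdz {n : ℕ} (f : (Fin n → ℂ) → ℂ) (j : Fin n) (z : Fin n → ℂ) : ℂ :=
  (fderiv ℝ f z (Pi.single j 1) - Complex.I * fderiv ℝ f z (Pi.single j Complex.I)) / 2

/-- Wirtinger derivative `∂/∂z̄_j` of a complex-valued function on `ℂⁿ`. -/
def wdzbar {n : ℕ} (f : (Fin n → ℂ) → ℂ) (j : Fin n) (z : Fin n → ℂ) : ℂ :=
  (fderiv ℝ f z (Pi.single j 1) + Complex.I * fderiv ℝ f z (Pi.single j Complex.I)) / 2

/-- A real-valued function on `ℂⁿ` viewed as complex-valued. -/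
def cplx {n : ℕ} (u : (Fin n → ℂ) → ℝ) : (Fin n → ℂ) → ℂ := fun z => (u z : ℂ)

/-- The complex Hessian `A = (u_{ij̄}) = (∂_i ∂_{j̄} u)`. -/
def hessA {n : ℕ} (u : (Fin n → ℂ) → ℝ) (z : Fin n → ℂ) : Matrix (Fin n) (Fin n) ℂ :=
  Matrix.of fun i j => wdz (wdzbar (cplx u) j) i z

/-- The matrix `B = (u_{ij}) = (∂_i ∂_j u)`. -/
def hessB {n : ℕ} (u : (Fin n → ℂ) → ℝ) (z : Fin n → ℂ) : Matrix (Fin n) (Fin n) ℂ :=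
  Matrix.of fun i j => wdz (wdz (cplx u) j) i z

/-- `u^{ij̄}`, the entries of the inverse of the complex Hessian, with the convention
`∑_j u^{ij̄} u_{kj̄} = δ_{ik}`. -/
def uInv {n : ℕ} (u : (Fin n → ℂ) → ℝ) (z : Fin n → ℂ) (i j : Fin n) : ℂ :=
  (hessA u z)⁻¹ j i

/-- Entrywise Wirtinger derivative `∂_i` of a matrix-valued function. -/
def mwdz {n : ℕ} (F : (Fin n → ℂ) → Matrix (Fin n) (Fin n) ℂ) (i : Fin n) (z : Fin n → ℂ) :
    Matrix (Fin n) (Fin n) ℂ :=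
  Matrix.of fun p q => wdz (fun w => F w p q) i z

/-- Entrywise Wirtinger derivative `∂_{j̄}` of a matrix-valued function. -/
def mwdzbar {n : ℕ} (F : (Fin n → ℂ) → Matrix (Fin n) (Fin n) ℂ) (j : Fin n) (z : Fin n → ℂ) :
    Matrix (Fin n) (Fin n) ℂ :=
  Matrix.of fun p q => wdzbar (fun w => F w p q) j z

/-- Entrywise complex conjugate of a matrix. -/
def mconj {n : ℕ} (M : Matrix (Fin n) (Fin n) ℂ) : Matrix (Fin n) (Fin n) ℂ :=
  M.map (starRingEnd ℂ)

/-- The real coordinate directions `x_1, …, x_n, y_1, …, y_n` of `ℂⁿ`. -/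
def realDir {n : ℕ} : (Fin n ⊕ Fin n) → (Fin n → ℂ)
  | Sum.inl j => Pi.single j 1
  | Sum.inr j => Pi.single j Complex.I

/-- The real Hessian of `u : ℂⁿ → ℝ` in the coordinates `(x_1,…,x_n,y_1,…,y_n)`. -/
def realHess {n : ℕ} (u : (Fin n → ℂ) → ℝ) (z : Fin n → ℂ) :
    Matrix (Fin n ⊕ Fin n) (Fin n ⊕ Fin n) ℝ :=
  Matrix.of fun a b => fderiv ℝ (fun w => fderiv ℝ u w (realDir b)) z (realDir a)






namespace KEaux

variable {n : ℕ} {Ω : Set (Fin n → ℂ)} {f g : (Fin n → ℂ) → ℂ} {z : Fin n → ℂ}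

local notation "𝒮" => ContDiffOn ℝ ((⊤:ℕ∞))

/-- Directional derivative. -/
def Dd (f : (Fin n → ℂ) → ℂ) (v z : Fin n → ℂ) : ℂ := fderiv ℝ f z v

lemma contDiffOn_Dd (hΩ : IsOpen Ω) (hf : 𝒮 f Ω) (v : Fin n → ℂ) :
    𝒮 (Dd f v) Ω :=
  (hf.fderiv_of_isOpen hΩ (by simp)).clm_apply contDiffOn_const

lemma dAt (hΩ : IsOpen Ω) (hf : 𝒮 f Ω) (hz : z ∈ Ω) :
    DifferentiableAt ℝ f z :=
  (hf.contDiffAt (hΩ.mem_nhds hz)).differentiableAt (by simp)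

lemma Dd_comm (hΩ : IsOpen Ω) (hf : 𝒮 f Ω) (hz : z ∈ Ω) (v w : Fin n → ℂ) :
    Dd (Dd f v) w z = Dd (Dd f w) v z := by
  have hd : 𝒮 (fderiv ℝ f) Ω := hf.fderiv_of_isOpen hΩ (by simp)
  have hdz : DifferentiableAt ℝ (fderiv ℝ f) z :=
    (hd.contDiffAt (hΩ.mem_nhds hz)).differentiableAt (by simp)
  have key : ∀ v w : Fin n → ℂ, Dd (Dd f v) w z = fderiv ℝ (fderiv ℝ f) z w v := by
    intro v w
    have h1 : Dd (Dd f v) w z = fderiv ℝ (fun y => (fderiv ℝ f y) v) z w := rfl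
    rw [h1, fderiv_clm_apply hdz (differentiableAt_const v)]
    simp
  rw [key, key]
  exact ((hf.contDiffAt (hΩ.mem_nhds hz)).isSymmSndFDerivAt
    (by rw [minSmoothness_of_isRCLikeNormedField]; exact ENat.natCast_le_of_coe_top_le_withTop le_rfl 2)) w v

lemma Dd_const (c : ℂ) (v : Fin n → ℂ) : Dd (fun _ => c) v z = 0 := by
  simp [Dd]

lemma Dd_add (hf : DifferentiableAt ℝ f z) (hg : DifferentiableAt ℝ g z) (v : Fin n → ℂ) :
    Dd (fun w => f w + g w) v z = Dd f v z + Dd g v z := by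
  simp [Dd, fderiv_fun_add hf hg]

lemma Dd_const_mul (hf : DifferentiableAt ℝ f z) (c : ℂ) (v : Fin n → ℂ) :
    Dd (fun w => c * f w) v z = c * Dd f v z := by
  simp [Dd, fderiv_const_mul hf c]

lemma Dd_mul (hf : DifferentiableAt ℝ f z) (hg : DifferentiableAt ℝ g z) (v : Fin n → ℂ) :
    Dd (fun w => f w * g w) v z = f z * Dd g v z + g z * Dd f v z := by
  simp [Dd, fderiv_fun_mul hf hg, smul_eq_mul]

lemma Dd_sum {ι : Type*} (s : Finset ι) (F : ι → (Fin n → ℂ) → ℂ)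
    (h : ∀ i ∈ s, DifferentiableAt ℝ (F i) z) (v : Fin n → ℂ) :
    Dd (fun w => ∑ i ∈ s, F i w) v z = ∑ i ∈ s, Dd (F i) v z := by
  simp [Dd, fderiv_fun_sum h]

lemma Dd_congr (h : f =ᶠ[nhds z] g) (v : Fin n → ℂ) : Dd f v z = Dd g v z := by
  rw [Dd, Dd, h.fderiv_eq]

lemma Dd_conj (v : Fin n → ℂ) :
    Dd (fun w => (starRingEnd ℂ) (f w)) v z = (starRingEnd ℂ) (Dd f v z) := by
  have h : (fun w => (starRingEnd ℂ) (f w)) = (Complex.conjCLE : ℂ ≃L[ℝ] ℂ) ∘ f := rfl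
  rw [Dd, h, ContinuousLinearEquiv.comp_fderiv]
  rfl

lemma Dd_cexp (hf : DifferentiableAt ℝ f z) (v : Fin n → ℂ) :
    Dd (fun w => Complex.exp (f w)) v z = Complex.exp (f z) * Dd f v z := by
  rw [Dd, (hf.hasFDerivAt.cexp).fderiv]
  simp [Dd, smul_eq_mul]

/-! wdz layer -/

lemma wdz_def (j : Fin n) :
    wdz f j z = (Dd f (Pi.single j 1) z - Complex.I * Dd f (Pi.single j Complex.I) z) / 2 := rfl

lemma wdzbar_def (j : Fin n) :
    wdzbar f j z = (Dd f (Pi.single j 1) z + Complex.I * Dd f (Pi.single j Complex.I) z) / 2 := rfl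

lemma contDiffOn_wdz (hΩ : IsOpen Ω) (hf : 𝒮 f Ω) (j : Fin n) : 𝒮 (wdz f j) Ω :=
  ((contDiffOn_Dd hΩ hf _).sub (contDiffOn_const.mul (contDiffOn_Dd hΩ hf _))).div_const 2

lemma contDiffOn_wdzbar (hΩ : IsOpen Ω) (hf : 𝒮 f Ω) (j : Fin n) : 𝒮 (wdzbar f j) Ω :=
  ((contDiffOn_Dd hΩ hf _).add (contDiffOn_const.mul (contDiffOn_Dd hΩ hf _))).div_const 2

lemma wdz_const (c : ℂ) (j : Fin n) : wdz (fun _ => c) j z = 0 := by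
  rw [wdz_def, Dd_const, Dd_const]; ring

lemma wdz_congr_nhds (h : f =ᶠ[nhds z] g) (j : Fin n) : wdz f j z = wdz g j z := by
  rw [wdz_def, wdz_def, Dd_congr h, Dd_congr h]

lemma wdzbar_congr_nhds (h : f =ᶠ[nhds z] g) (j : Fin n) : wdzbar f j z = wdzbar g j z := by
  rw [wdzbar_def, wdzbar_def, Dd_congr h, Dd_congr h]

lemma eventuallyEq_of_Omega (hΩ : IsOpen Ω) (h : ∀ w ∈ Ω, f w = g w) (hz : z ∈ Ω) :
    f =ᶠ[nhds z] g :=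
  Filter.eventually_iff_exists_mem.2 ⟨Ω, hΩ.mem_nhds hz, h⟩

lemma wdz_congrΩ (hΩ : IsOpen Ω) (h : ∀ w ∈ Ω, f w = g w) (hz : z ∈ Ω) (j : Fin n) :
    wdz f j z = wdz g j z :=
  wdz_congr_nhds (eventuallyEq_of_Omega hΩ h hz) j

lemma wdzbar_congrΩ (hΩ : IsOpen Ω) (h : ∀ w ∈ Ω, f w = g w) (hz : z ∈ Ω) (j : Fin n) :
    wdzbar f j z = wdzbar g j z :=
  wdzbar_congr_nhds (eventuallyEq_of_Omega hΩ h hz) j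

lemma wdz_add (hf : DifferentiableAt ℝ f z) (hg : DifferentiableAt ℝ g z) (j : Fin n) :
    wdz (fun w => f w + g w) j z = wdz f j z + wdz g j z := by
  rw [wdz_def, wdz_def, wdz_def, Dd_add hf hg, Dd_add hf hg]; ring

lemma wdz_const_mul (hf : DifferentiableAt ℝ f z) (c : ℂ) (j : Fin n) :
    wdz (fun w => c * f w) j z = c * wdz f j z := by
  rw [wdz_def, wdz_def, Dd_const_mul hf, Dd_const_mul hf]; ring

lemma wdz_mul (hf : DifferentiableAt ℝ f z) (hg : DifferentiableAt ℝ g z) (j : Fin n) :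
    wdz (fun w => f w * g w) j z = f z * wdz g j z + g z * wdz f j z := by
  rw [wdz_def, wdz_def, wdz_def, Dd_mul hf hg, Dd_mul hf hg]; ring

lemma wdz_sum {ι : Type*} (s : Finset ι) (F : ι → (Fin n → ℂ) → ℂ)
    (h : ∀ i ∈ s, DifferentiableAt ℝ (F i) z) (j : Fin n) :
    wdz (fun w => ∑ i ∈ s, F i w) j z = ∑ i ∈ s, wdz (F i) j z := by
  rw [wdz_def, Dd_sum s F h, Dd_sum s F h]
  rw [Finset.mul_sum, ← Finset.sum_sub_distrib, Finset.sum_div]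
  exact Finset.sum_congr rfl fun i _ => rfl

lemma wdz_cexp (hf : DifferentiableAt ℝ f z) (j : Fin n) :
    wdz (fun w => Complex.exp (f w)) j z = Complex.exp (f z) * wdz f j z := by
  rw [wdz_def, wdz_def, Dd_cexp hf, Dd_cexp hf]; ring

lemma wdz_conj (j : Fin n) :
    wdz (fun w => (starRingEnd ℂ) (f w)) j z = (starRingEnd ℂ) (wdzbar f j z) := by
  rw [wdz_def, wdzbar_def, Dd_conj, Dd_conj]
  simp [map_add, _root_.map_mul, Complex.conj_I, map_div₀, map_ofNat]
  ring

lemma wdzbar_conj (j : Fin n) :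
    wdzbar (fun w => (starRingEnd ℂ) (f w)) j z = (starRingEnd ℂ) (wdz f j z) := by
  rw [wdzbar_def, wdz_def, Dd_conj, Dd_conj]
  simp [map_sub, _root_.map_mul, Complex.conj_I, map_div₀, map_ofNat]

/-! commutation -/

/-- generic Wirtinger-type operator -/
def Wg (s : ℂ) (a b : Fin n → ℂ) (f : (Fin n → ℂ) → ℂ) (z : Fin n → ℂ) : ℂ :=
  (Dd f a z + s * Dd f b z) / 2

lemma wdz_eq_Wg (f : (Fin n → ℂ) → ℂ) (j : Fin n) :
    wdz f j = Wg (-Complex.I) (Pi.single j 1) (Pi.single j Complex.I) f :=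
  funext fun z => by rw [wdz_def, Wg]; ring

lemma wdzbar_eq_Wg (f : (Fin n → ℂ) → ℂ) (j : Fin n) :
    wdzbar f j = Wg Complex.I (Pi.single j 1) (Pi.single j Complex.I) f :=
  funext fun z => by rw [wdzbar_def, Wg]

lemma Dd_Wg (hΩ : IsOpen Ω) (hf : 𝒮 f Ω) (hz : z ∈ Ω) (s : ℂ) (a b v : Fin n → ℂ) :
    Dd (Wg s a b f) v z = (Dd (Dd f a) v z + s * Dd (Dd f b) v z) / 2 := by
  have ha := dAt hΩ (contDiffOn_Dd hΩ hf a) hz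
  have hb := dAt hΩ (contDiffOn_Dd hΩ hf b) hz
  have h : Wg s a b f = fun w => (2⁻¹ : ℂ) * Dd f a w + (s/2) * Dd f b w :=
    funext fun w => by rw [Wg]; ring
  rw [h, Dd_add (ha.const_mul _) (hb.const_mul _), Dd_const_mul ha, Dd_const_mul hb]
  ring

lemma Wg_comm (hΩ : IsOpen Ω) (hf : 𝒮 f Ω) (hz : z ∈ Ω) (s t : ℂ) (a b c d : Fin n → ℂ) :
    Wg s a b (Wg t c d f) z = Wg t c d (Wg s a b f) z := by
  have hW1 : 𝒮 (Wg t c d f) Ω := by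
    have h : Wg t c d f = fun w => (2⁻¹ : ℂ) * Dd f c w + (t/2) * Dd f d w :=
      funext fun w => by rw [Wg]; ring
    rw [h]
    exact (contDiffOn_const.mul (contDiffOn_Dd hΩ hf c)).add
      (contDiffOn_const.mul (contDiffOn_Dd hΩ hf d))
  have hW2 : 𝒮 (Wg s a b f) Ω := by
    have h : Wg s a b f = fun w => (2⁻¹ : ℂ) * Dd f a w + (s/2) * Dd f b w :=
      funext fun w => by rw [Wg]; ring
    rw [h]
    exact (contDiffOn_const.mul (contDiffOn_Dd hΩ hf a)).add
      (contDiffOn_const.mul (contDiffOn_Dd hΩ hf b))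
  have e1 : Wg s a b (Wg t c d f) z = (Dd (Wg t c d f) a z + s * Dd (Wg t c d f) b z)/2 := rfl
  have e2 : Wg t c d (Wg s a b f) z = (Dd (Wg s a b f) c z + t * Dd (Wg s a b f) d z)/2 := rfl
  rw [e1, e2, Dd_Wg hΩ hf hz, Dd_Wg hΩ hf hz, Dd_Wg hΩ hf hz, Dd_Wg hΩ hf hz,
    Dd_comm hΩ hf hz c a, Dd_comm hΩ hf hz d a, Dd_comm hΩ hf hz c b, Dd_comm hΩ hf hz d b]
  ring

lemma wdz_wdz_comm (hΩ : IsOpen Ω) (hf : 𝒮 f Ω) (hz : z ∈ Ω) (i j : Fin n) :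
    wdz (wdz f j) i z = wdz (wdz f i) j z := by
  rw [wdz_eq_Wg f j, wdz_eq_Wg f i, wdz_eq_Wg _ i, wdz_eq_Wg _ j]
  exact Wg_comm hΩ hf hz _ _ _ _ _ _

lemma wdz_wdzbar_comm (hΩ : IsOpen Ω) (hf : 𝒮 f Ω) (hz : z ∈ Ω) (i j : Fin n) :
    wdz (wdzbar f j) i z = wdzbar (wdz f i) j z := by
  rw [wdzbar_eq_Wg f j, wdz_eq_Wg f i, wdz_eq_Wg _ i, wdzbar_eq_Wg _ j]
  exact Wg_comm hΩ hf hz _ _ _ _ _ _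

end KEaux
namespace KEaux

variable {n : ℕ} {Ω : Set (Fin n → ℂ)} {f g : (Fin n → ℂ) → ℂ} {z : Fin n → ℂ}
local notation "𝒮" => ContDiffOn ℝ ((⊤:ℕ∞))

lemma contDiffOn_finset_prod {ι : Type*} (s : Finset ι) (F : ι → (Fin n → ℂ) → ℂ)
    (h : ∀ i ∈ s, 𝒮 (F i) Ω) :
    𝒮 (fun z => ∏ i ∈ s, F i z) Ω := by
  classical
  induction s using Finset.induction_on with
  | empty => simpa using (contDiffOn_const : 𝒮 (fun _ => (1:ℂ)) Ω)
  | @insert a s ha ih =>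
    have h' : (fun z => ∏ i ∈ insert a s, F i z) = fun z => F a z * ∏ i ∈ s, F i z :=
      funext fun z => Finset.prod_insert ha
    rw [h']
    exact (h a (Finset.mem_insert_self a s)).mul
      (ih fun i hi => h i (Finset.mem_insert_of_mem hi))

lemma contDiffOn_det {M : (Fin n → ℂ) → Matrix (Fin n) (Fin n) ℂ}
    (h : ∀ p q, 𝒮 (fun z => M z p q) Ω) :
    𝒮 (fun z => (M z).det) Ω := by
  have e : (fun z => (M z).det)
      = fun z => ∑ σ : Equiv.Perm (Fin n),
          ((Equiv.Perm.sign σ : ℤ) : ℂ) * ∏ i, M z (σ i) i :=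
    funext fun z => by rw [Matrix.det_apply']
  rw [e]
  exact ContDiffOn.sum fun σ _ =>
    contDiffOn_const.mul (contDiffOn_finset_prod _ _ fun i _ => h _ _)

lemma diffAt_prod {ι : Type*} [DecidableEq ι] (s : Finset ι) (F : ι → (Fin n → ℂ) → ℂ)
    (h : ∀ i ∈ s, DifferentiableAt ℝ (F i) z) :
    DifferentiableAt ℝ (fun w => ∏ i ∈ s, F i w) z :=
  (HasFDerivAt.finset_prod (u := s) (fun i hi => (h i hi).hasFDerivAt)).differentiableAt

lemma Dd_prod {ι : Type*} [DecidableEq ι] (s : Finset ι) (F : ι → (Fin n → ℂ) → ℂ)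
    (h : ∀ i ∈ s, DifferentiableAt ℝ (F i) z) (v : Fin n → ℂ) :
    Dd (fun w => ∏ i ∈ s, F i w) v z
      = ∑ i ∈ s, (∏ j ∈ s.erase i, F j z) * Dd (F i) v z := by
  have H := HasFDerivAt.finset_prod (u := s) (fun i hi => (h i hi).hasFDerivAt)
  rw [Dd, H.fderiv]
  simp [Dd, smul_eq_mul]

lemma adjugate_entry (A : Matrix (Fin n) (Fin n) ℂ) (j k : Fin n) :
    Matrix.adjugate A j k
      = ∑ σ : Equiv.Perm (Fin n), ((Equiv.Perm.sign σ : ℤ) : ℂ) *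
          ((if σ j = k then (1:ℂ) else 0) * ∏ i ∈ Finset.univ.erase j, A (σ i) i) := by
  have h1 : Matrix.adjugate A j k = (A.updateCol j (Pi.single k 1)).det := by
    rw [← Matrix.cramer_apply, Matrix.cramer_eq_adjugate_mulVec, Matrix.mulVec_single]
    simp
  rw [h1, Matrix.det_apply']
  refine Finset.sum_congr rfl fun σ _ => ?_
  congr 1
  have h2 : ∏ i, (A.updateCol j (Pi.single k 1)) (σ i) i
      = (A.updateCol j (Pi.single k 1)) (σ j) j *
        ∏ i ∈ Finset.univ.erase j, (A.updateCol j (Pi.single k 1)) (σ i) i :=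
    (Finset.mul_prod_erase Finset.univ _ (Finset.mem_univ j)).symm
  rw [h2]
  congr 1
  · rw [Matrix.updateCol_apply, if_pos rfl, Pi.single_apply]
  · exact Finset.prod_congr rfl fun i hi => by
      rw [Matrix.updateCol_apply, if_neg (Finset.ne_of_mem_erase hi)]

lemma Dd_det {M : (Fin n → ℂ) → Matrix (Fin n) (Fin n) ℂ}
    (h : ∀ p q, DifferentiableAt ℝ (fun z => M z p q) z) (v : Fin n → ℂ) :
    Dd (fun w => (M w).det) v z
      = ∑ j, ∑ k, Matrix.adjugate (M z) j k * Dd (fun w => M w k j) v z := by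
  classical
  have e : (fun w => (M w).det)
      = fun w => ∑ σ : Equiv.Perm (Fin n),
          ((Equiv.Perm.sign σ : ℤ) : ℂ) * ∏ i, M w (σ i) i :=
    funext fun w => by rw [Matrix.det_apply']
  have hprod : ∀ σ : Equiv.Perm (Fin n),
      DifferentiableAt ℝ (fun w => ∏ i, M w (σ i) i) z :=
    fun σ => diffAt_prod _ _ fun i _ => h _ _
  rw [e, Dd_sum _ _ (fun σ _ => (hprod σ).const_mul _) v]
  have hD : ∀ σ : Equiv.Perm (Fin n),
      Dd (fun w => ((Equiv.Perm.sign σ : ℤ):ℂ) * ∏ i, M w (σ i) i) v z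
        = ((Equiv.Perm.sign σ : ℤ):ℂ) *
            ∑ i, (∏ i' ∈ Finset.univ.erase i, M z (σ i') i') * Dd (fun w => M w (σ i) i) v z := by
    intro σ
    rw [Dd_const_mul (hprod σ), Dd_prod _ _ (fun i _ => h _ _)]
  simp only [hD]
  simp only [adjugate_entry, Finset.sum_mul, Finset.mul_sum]
  rw [Finset.sum_comm]
  refine Finset.sum_congr rfl fun j _ => ?_
  rw [Finset.sum_comm]
  refine Finset.sum_congr rfl fun σ _ => ?_
  simp only [ite_mul, mul_ite, one_mul, zero_mul, mul_zero, mul_one]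
  rw [Finset.sum_ite_eq Finset.univ (σ j)]
  simp only [Finset.mem_univ, if_true]
  ring

end KEaux
namespace KEaux
variable {n : ℕ} {z : Fin n → ℂ}
lemma wdz_det {M : (Fin n → ℂ) → Matrix (Fin n) (Fin n) ℂ}
    (h : ∀ p q, DifferentiableAt ℝ (fun z => M z p q) z) (j : Fin n) :
    wdz (fun w => (M w).det) j z
      = ∑ a, ∑ b, Matrix.adjugate (M z) a b * wdz (fun w => M w b a) j z := by
  rw [wdz_def, Dd_det h, Dd_det h]
  simp only [Finset.mul_sum, Finset.sum_div, ← Finset.sum_sub_distrib]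
  refine Finset.sum_congr rfl fun a _ => Finset.sum_congr rfl fun b _ => ?_
  rw [wdz_def]
  ring
end KEaux
namespace KEaux

variable {n : ℕ}

lemma tr2 {m : Type*} [Fintype m] (X Y : Matrix m m ℂ) :
    ∑ j, ∑ k, X j k * Y k j = Matrix.trace (X * Y) := by
  simp [Matrix.trace, Matrix.mul_apply, Matrix.diag]

lemma ALG {m : Type*} [Fintype m] [DecidableEq m] (N P Q M2 P' : Matrix m m ℂ) (cb : ℂ)
    (hP' : P' = -(N * P * N))
    (h1 : Matrix.trace (P' * Q) + Matrix.trace (N * M2) = cb) :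
    Matrix.trace (N * M2) = Matrix.trace (N * (Q * (N * P))) + cb := by
  have e1 : Matrix.trace (N * (Q * (N * P))) = Matrix.trace ((N * Q) * (N * P)) := by
    rw [Matrix.mul_assoc]
  have e2 : Matrix.trace ((N * Q) * (N * P)) = Matrix.trace ((N * P) * (N * Q)) :=
    Matrix.trace_mul_comm _ _
  have e3 : Matrix.trace (P' * Q) = -Matrix.trace ((N * P) * (N * Q)) := by
    rw [hP', Matrix.neg_mul, Matrix.trace_neg]
    congr 2
    rw [Matrix.mul_assoc, Matrix.mul_assoc]
  rw [e1, e2]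
  linear_combination h1 - e3

end KEaux

theorem laplacian_B_eq_BA (n : ℕ) (Ω : Set (Fin n → ℂ)) (hΩ : IsOpen Ω)
    (u : (Fin n → ℂ) → ℝ) (hu : ContDiffOn ℝ (⊤ : ℕ∞) u Ω)
    (hpsh : ∀ z ∈ Ω, (hessA u z).PosDef)
    (hKE : ∀ z ∈ Ω, (hessA u z).det = (Real.exp ((n + 1) * u z) : ℂ)) :
    ∀ z ∈ Ω,
      ∑ i, ∑ j, uInv u z i j • mwdz (mwdzbar (hessB u) j) i z
        = (∑ i, ∑ j, uInv u z i j •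
            (mwdzbar (hessB u) j z * (mconj (hessA u z))⁻¹ *
              mwdz (fun w => mconj (hessA u w)) i z))
          + ((n : ℂ) + 1) • hessB u z := by
  classical
  intro z hz
  have hφ : ContDiffOn ℝ (⊤:ℕ∞) (cplx u) Ω :=
    Complex.ofRealCLM.contDiff.comp_contDiffOn hu
  have hAent : ∀ i j, ContDiffOn ℝ (⊤:ℕ∞) (fun w => hessA u w i j) Ω := fun i j =>
    KEaux.contDiffOn_wdz hΩ (KEaux.contDiffOn_wdzbar hΩ hφ j) i
  have hdet0 : ∀ w ∈ Ω, (hessA u w).det ≠ 0 := fun w hw => (hpsh w hw).det_pos.ne'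
  have hdet_sm : ContDiffOn ℝ (⊤:ℕ∞) (fun w => (hessA u w).det) Ω :=
    KEaux.contDiffOn_det hAent
  have hadj_sm : ∀ i j, ContDiffOn ℝ (⊤:ℕ∞) (fun w => Matrix.adjugate (hessA u w) i j) Ω := by
    intro i j
    have e : (fun w => Matrix.adjugate (hessA u w) i j)
        = fun w => ∑ σ : Equiv.Perm (Fin n), ((Equiv.Perm.sign σ : ℤ) : ℂ) *
            ((if σ i = j then (1:ℂ) else 0) *
              ∏ l ∈ Finset.univ.erase i, hessA u w (σ l) l) :=
      funext fun w => KEaux.adjugate_entry _ i j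
    rw [e]
    exact ContDiffOn.sum fun σ _ => contDiffOn_const.mul
      (contDiffOn_const.mul (KEaux.contDiffOn_finset_prod _ _ fun l _ => hAent _ _))
  have hAinvEnt : ∀ (w : Fin n → ℂ), ∀ i j, (hessA u w)⁻¹ i j
      = ((hessA u w).det)⁻¹ * Matrix.adjugate (hessA u w) i j := by
    intro w i j
    rw [Matrix.inv_def, Ring.inverse_eq_inv]
    simp [smul_eq_mul]
  have hN_sm : ∀ i j, ContDiffOn ℝ (⊤:ℕ∞) (fun w => (hessA u w)⁻¹ i j) Ω := by
    intro i j
    have e : (fun w => (hessA u w)⁻¹ i j)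
        = fun w => ((hessA u w).det)⁻¹ * Matrix.adjugate (hessA u w) i j :=
      funext fun w => hAinvEnt w i j
    rw [e]
    exact (hdet_sm.inv hdet0).mul (hadj_sm i j)
  have hKE' : ∀ w ∈ Ω, (hessA u w).det = Complex.exp (((n:ℂ)+1) * cplx u w) := by
    intro w hw
    rw [hKE w hw, Complex.ofReal_exp]
    congr 1
    show (((n + 1 : ℝ) * u w : ℝ) : ℂ) = ((n:ℂ)+1) * cplx u w
    push_cast [cplx]
    ring
  -- first differentiated identity
  have S3 : ∀ (q : Fin n), ∀ w ∈ Ω,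
      ∑ j, ∑ k, (hessA u w)⁻¹ j k * wdz (fun w' => hessA u w' k j) q w
        = ((n:ℂ)+1) * wdz (cplx u) q w := by
    intro q w hw
    have hJ : wdz (fun w' => (hessA u w').det) q w
        = ∑ j, ∑ k, Matrix.adjugate (hessA u w) j k * wdz (fun w' => hessA u w' k j) q w :=
      KEaux.wdz_det (fun a b => KEaux.dAt hΩ (hAent a b) hw) q
    have h2 : wdz (fun w' => (hessA u w').det) q w
        = (hessA u w).det * (((n:ℂ)+1) * wdz (cplx u) q w) := by
      rw [KEaux.wdz_congrΩ hΩ hKE' hw q,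
        KEaux.wdz_cexp ((KEaux.dAt hΩ hφ hw).const_mul _) q,
        KEaux.wdz_const_mul (KEaux.dAt hΩ hφ hw) _ q, ← hKE' w hw]
    have hmul : ∀ j k, (hessA u w)⁻¹ j k * wdz (fun w' => hessA u w' k j) q w
        = ((hessA u w).det)⁻¹ *
          (Matrix.adjugate (hessA u w) j k * wdz (fun w' => hessA u w' k j) q w) := by
      intro j k; rw [hAinvEnt w j k]; ring
    calc ∑ j, ∑ k, (hessA u w)⁻¹ j k * wdz (fun w' => hessA u w' k j) q w
        = ((hessA u w).det)⁻¹ * ∑ j, ∑ k,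
            Matrix.adjugate (hessA u w) j k * wdz (fun w' => hessA u w' k j) q w := by
          simp only [hmul, ← Finset.mul_sum]
      _ = ((hessA u w).det)⁻¹ * ((hessA u w).det * (((n:ℂ)+1) * wdz (cplx u) q w)) := by
          rw [← hJ, h2]
      _ = ((n:ℂ)+1) * wdz (cplx u) q w := by
          rw [← mul_assoc, inv_mul_cancel₀ (hdet0 w hw), one_mul]
  have hG_sm : ∀ (q k j : Fin n),
      ContDiffOn ℝ (⊤:ℕ∞) (wdz (fun w' => hessA u w' k j) q) Ω :=
    fun q k j => KEaux.contDiffOn_wdz hΩ (hAent k j) q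
  -- second differentiated identity
  have S4 : ∀ p q : Fin n,
      ∑ j, ∑ k, (wdz (fun w => (hessA u w)⁻¹ j k) p z * wdz (fun w' => hessA u w' k j) q z
        + (hessA u z)⁻¹ j k * wdz (wdz (fun w' => hessA u w' k j) q) p z)
      = ((n:ℂ)+1) * hessB u z p q := by
    intro p q
    have hsummand_sm : ∀ j k, ContDiffOn ℝ (⊤:ℕ∞)
        (fun w => (hessA u w)⁻¹ j k * wdz (fun w' => hessA u w' k j) q w) Ω :=
      fun j k => (hN_sm j k).mul (hG_sm q k j)
    have hinner_sm : ∀ j, ContDiffOn ℝ (⊤:ℕ∞)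
        (fun w => ∑ k, (hessA u w)⁻¹ j k * wdz (fun w' => hessA u w' k j) q w) Ω :=
      fun j => ContDiffOn.sum fun k _ => hsummand_sm j k
    have hL := KEaux.wdz_congrΩ hΩ (S3 q) hz p
    rw [KEaux.wdz_sum _ _ (fun j _ => KEaux.dAt hΩ (hinner_sm j) hz) p] at hL
    rw [KEaux.wdz_const_mul (KEaux.dAt hΩ (KEaux.contDiffOn_wdz hΩ hφ q) hz) _ p] at hL
    have e1 : ∀ j ∈ (Finset.univ : Finset (Fin n)),
        wdz (fun w => ∑ k, (hessA u w)⁻¹ j k * wdz (fun w' => hessA u w' k j) q w) p z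
          = ∑ k, (wdz (fun w => (hessA u w)⁻¹ j k) p z * wdz (fun w' => hessA u w' k j) q z
              + (hessA u z)⁻¹ j k * wdz (wdz (fun w' => hessA u w' k j) q) p z) := by
      intro j _
      rw [KEaux.wdz_sum _ _ (fun k _ => KEaux.dAt hΩ (hsummand_sm j k) hz) p]
      refine Finset.sum_congr rfl fun k _ => ?_
      rw [KEaux.wdz_mul (KEaux.dAt hΩ (hN_sm j k) hz) (KEaux.dAt hΩ (hG_sm q k j) hz) p]
      ring
    rw [Finset.sum_congr rfl e1] at hL
    exact hL
  -- differentiated inverse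
  have hunitz : IsUnit (hessA u z).det := isUnit_iff_ne_zero.2 (hdet0 z hz)
  have S5 : ∀ p : Fin n,
      (Matrix.of fun a b => wdz (fun w => (hessA u w)⁻¹ a b) p z)
        = -((hessA u z)⁻¹ * (Matrix.of fun a b => wdz (fun w => hessA u w a b) p z)
            * (hessA u z)⁻¹) := by
    intro p
    have hid : ∀ j l : Fin n, ∀ w ∈ Ω,
        (fun w' => ∑ a, (hessA u w')⁻¹ j a * hessA u w' a l) w
          = (fun _ => (1 : Matrix (Fin n) (Fin n) ℂ) j l) w := by
      intro j l w hw
      have h := Matrix.nonsing_inv_mul (hessA u w) (isUnit_iff_ne_zero.2 (hdet0 w hw))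
      calc ∑ a, (hessA u w)⁻¹ j a * hessA u w a l
          = ((hessA u w)⁻¹ * hessA u w) j l := (Matrix.mul_apply).symm
        _ = (1 : Matrix (Fin n) (Fin n) ℂ) j l := by rw [h]
    have hz5 : ∀ j l : Fin n,
        ∑ a, (wdz (fun w => (hessA u w)⁻¹ j a) p z * hessA u z a l
          + (hessA u z)⁻¹ j a * wdz (fun w => hessA u w a l) p z) = 0 := by
      intro j l
      have h0 := KEaux.wdz_congrΩ hΩ (hid j l) hz p
      rw [KEaux.wdz_const] at h0
      rw [KEaux.wdz_sum _ (fun a w => (hessA u w)⁻¹ j a * hessA u w a l) (fun a _ =>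
        ((KEaux.dAt hΩ (hN_sm j a) hz).mul (KEaux.dAt hΩ (hAent a l) hz))) p] at h0
      rw [← h0]
      refine Finset.sum_congr rfl fun a _ => ?_
      rw [KEaux.wdz_mul (KEaux.dAt hΩ (hN_sm j a) hz) (KEaux.dAt hΩ (hAent a l) hz) p]
      ring
    have hmat : (Matrix.of fun a b => wdz (fun w => (hessA u w)⁻¹ a b) p z) * hessA u z
        + (hessA u z)⁻¹ * (Matrix.of fun a b => wdz (fun w => hessA u w a b) p z) = 0 := by
      ext j l
      have := hz5 j l
      simpa [Matrix.mul_apply, Matrix.add_apply, ← Finset.sum_add_distrib] using this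
    have hAN : hessA u z * (hessA u z)⁻¹ = 1 := Matrix.mul_nonsing_inv _ hunitz
    have h6 : (Matrix.of fun a b => wdz (fun w => (hessA u w)⁻¹ a b) p z) * hessA u z
        = -((hessA u z)⁻¹ * (Matrix.of fun a b => wdz (fun w => hessA u w a b) p z)) :=
      eq_neg_of_add_eq_zero_left hmat
    calc (Matrix.of fun a b => wdz (fun w => (hessA u w)⁻¹ a b) p z)
        = (Matrix.of fun a b => wdz (fun w => (hessA u w)⁻¹ a b) p z)
            * (hessA u z * (hessA u z)⁻¹) := by rw [hAN, Matrix.mul_one]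
      _ = ((Matrix.of fun a b => wdz (fun w => (hessA u w)⁻¹ a b) p z) * hessA u z)
            * (hessA u z)⁻¹ := by rw [Matrix.mul_assoc]
      _ = -((hessA u z)⁻¹ * (Matrix.of fun a b => wdz (fun w => hessA u w a b) p z))
            * (hessA u z)⁻¹ := by rw [h6]
      _ = -((hessA u z)⁻¹ * (Matrix.of fun a b => wdz (fun w => hessA u w a b) p z)
            * (hessA u z)⁻¹) := by rw [Matrix.neg_mul]
  -- Hermitian symmetry
  have hHerm : ∀ w ∈ Ω, ∀ i j, (starRingEnd ℂ) (hessA u w i j) = hessA u w j i := by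
    intro w hw i j
    have e1 : (starRingEnd ℂ) (hessA u w i j)
        = wdzbar (fun y => (starRingEnd ℂ) (wdzbar (cplx u) j y)) i w :=
      (KEaux.wdzbar_conj i).symm
    have e2 : (fun y => (starRingEnd ℂ) (wdzbar (cplx u) j y)) = wdz (cplx u) j := by
      funext y
      have hre : (fun w' => (starRingEnd ℂ) (cplx u w')) = cplx u :=
        funext fun w' => Complex.conj_ofReal _
      rw [← KEaux.wdz_conj (f := cplx u) (z := y) j, hre]
    rw [e1, e2]
    exact (KEaux.wdz_wdzbar_comm hΩ hφ hw j i).symm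
  have hconjAinv : (mconj (hessA u z))⁻¹ = ((hessA u z)⁻¹)ᵀ := by
    have h : mconj (hessA u z) = (hessA u z)ᵀ := by
      ext i j
      exact hHerm z hz i j
    rw [h, ← Matrix.transpose_nonsing_inv]
  -- entry identifications
  have E2 : ∀ j p k : Fin n,
      mwdzbar (hessB u) j z p k = wdz (fun w => hessA u w k j) p z := by
    intro j p k
    have h0 : mwdzbar (hessB u) j z p k = wdzbar (wdz (wdz (cplx u) k) p) j z := rfl
    rw [h0, ← KEaux.wdz_wdzbar_comm hΩ (KEaux.contDiffOn_wdz hΩ hφ k) hz p j]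
    refine KEaux.wdz_congrΩ hΩ (fun w hw => ?_) hz p
    exact (KEaux.wdz_wdzbar_comm hΩ hφ hw k j).symm
  have E3 : ∀ i l q' : Fin n,
      mwdz (fun w => mconj (hessA u w)) i z l q' = wdz (fun w => hessA u w i l) q' z := by
    intro i l q'
    have h0 : mwdz (fun w => mconj (hessA u w)) i z l q'
        = wdz (fun w => (starRingEnd ℂ) (hessA u w l q')) i z := rfl
    rw [h0, KEaux.wdz_congrΩ hΩ (fun w hw => hHerm w hw l q') hz i]
    exact KEaux.wdz_wdz_comm hΩ (KEaux.contDiffOn_wdzbar hΩ hφ l) hz i q'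
  have E1 : ∀ i j p q : Fin n,
      mwdz (mwdzbar (hessB u) j) i z p q
        = wdz (wdz (fun w => hessA u w i j) q) p z := by
    intro i j p q
    have h0 : mwdz (mwdzbar (hessB u) j) i z p q
        = wdz (fun w => wdzbar (wdz (wdz (cplx u) q) p) j w) i z := rfl
    rw [h0]
    have hA : ∀ w ∈ Ω, wdzbar (wdz (wdz (cplx u) q) p) j w
        = wdz (wdzbar (wdz (cplx u) q) j) p w :=
      fun w hw => (KEaux.wdz_wdzbar_comm hΩ (KEaux.contDiffOn_wdz hΩ hφ q) hw p j).symm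
    rw [KEaux.wdz_congrΩ hΩ hA hz i]
    rw [KEaux.wdz_wdz_comm hΩ
      (KEaux.contDiffOn_wdzbar hΩ (KEaux.contDiffOn_wdz hΩ hφ q) j) hz i p]
    refine KEaux.wdz_congrΩ hΩ (fun w hw => ?_) hz p
    have hB : ∀ y ∈ Ω, wdzbar (wdz (cplx u) q) j y = wdz (wdzbar (cplx u) j) q y :=
      fun y hy => (KEaux.wdz_wdzbar_comm hΩ hφ hy q j).symm
    rw [KEaux.wdz_congrΩ hΩ hB hw i]
    exact KEaux.wdz_wdz_comm hΩ (KEaux.contDiffOn_wdzbar hΩ hφ j) hw i q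
  -- final assembly
  ext p q
  simp only [Matrix.sum_apply, Matrix.smul_apply, Matrix.add_apply, smul_eq_mul]
  have hLHS : ∑ i, ∑ j, uInv u z i j * mwdz (mwdzbar (hessB u) j) i z p q
      = Matrix.trace ((hessA u z)⁻¹
          * (Matrix.of fun a b => wdz (wdz (fun w => hessA u w a b) q) p z)) := by
    calc ∑ i, ∑ j, uInv u z i j * mwdz (mwdzbar (hessB u) j) i z p q
        = ∑ i, ∑ j, (hessA u z)⁻¹ j i
            * (Matrix.of fun a b => wdz (wdz (fun w => hessA u w a b) q) p z) i j := by
          refine Finset.sum_congr rfl fun i _ => Finset.sum_congr rfl fun j _ => ?_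
          rw [E1 i j p q]
          rfl
      _ = ∑ j, ∑ i, (hessA u z)⁻¹ j i
            * (Matrix.of fun a b => wdz (wdz (fun w => hessA u w a b) q) p z) i j :=
          Finset.sum_comm
      _ = Matrix.trace ((hessA u z)⁻¹
            * (Matrix.of fun a b => wdz (wdz (fun w => hessA u w a b) q) p z)) :=
          KEaux.tr2 _ _
  have hT : ∀ i j : Fin n,
      (mwdzbar (hessB u) j z * (mconj (hessA u z))⁻¹
        * mwdz (fun w => mconj (hessA u w)) i z) p q
      = ((Matrix.of fun a b => wdz (fun w => hessA u w a b) q z)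
          * ((hessA u z)⁻¹ * (Matrix.of fun a b => wdz (fun w => hessA u w a b) p z))) i j := by
    intro i j
    rw [Matrix.mul_apply]
    have hXY : ∀ l, (mwdzbar (hessB u) j z * (mconj (hessA u z))⁻¹) p l
        = ∑ k, (Matrix.of fun a b => wdz (fun w => hessA u w a b) p z) k j
            * (hessA u z)⁻¹ l k := by
      intro l
      rw [Matrix.mul_apply, hconjAinv]
      refine Finset.sum_congr rfl fun k _ => ?_
      rw [E2 j p k]
      rfl
    calc ∑ l, (mwdzbar (hessB u) j z * (mconj (hessA u z))⁻¹) p l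
          * mwdz (fun w => mconj (hessA u w)) i z l q
        = ∑ l, (∑ k, (Matrix.of fun a b => wdz (fun w => hessA u w a b) p z) k j
              * (hessA u z)⁻¹ l k)
            * (Matrix.of fun a b => wdz (fun w => hessA u w a b) q z) i l := by
          refine Finset.sum_congr rfl fun l _ => ?_
          rw [hXY l, E3 i l q]
          rfl
      _ = ((Matrix.of fun a b => wdz (fun w => hessA u w a b) q z)
            * ((hessA u z)⁻¹ * (Matrix.of fun a b => wdz (fun w => hessA u w a b) p z))) i j := by
          simp only [Matrix.mul_apply, Finset.sum_mul, Finset.mul_sum]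
          refine Finset.sum_congr rfl fun l _ => Finset.sum_congr rfl fun k _ => ?_
          ring
  have hRHS1 : ∑ i, ∑ j, uInv u z i j
        * (mwdzbar (hessB u) j z * (mconj (hessA u z))⁻¹
            * mwdz (fun w => mconj (hessA u w)) i z) p q
      = Matrix.trace ((hessA u z)⁻¹
          * ((Matrix.of fun a b => wdz (fun w => hessA u w a b) q z)
            * ((hessA u z)⁻¹ * (Matrix.of fun a b => wdz (fun w => hessA u w a b) p z)))) := by
    calc ∑ i, ∑ j, uInv u z i j
          * (mwdzbar (hessB u) j z * (mconj (hessA u z))⁻¹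
              * mwdz (fun w => mconj (hessA u w)) i z) p q
        = ∑ i, ∑ j, (hessA u z)⁻¹ j i
            * ((Matrix.of fun a b => wdz (fun w => hessA u w a b) q z)
              * ((hessA u z)⁻¹
                * (Matrix.of fun a b => wdz (fun w => hessA u w a b) p z))) i j := by
          refine Finset.sum_congr rfl fun i _ => Finset.sum_congr rfl fun j _ => ?_
          rw [hT i j]
          rfl
      _ = ∑ j, ∑ i, (hessA u z)⁻¹ j i
            * ((Matrix.of fun a b => wdz (fun w => hessA u w a b) q z)
              * ((hessA u z)⁻¹
                * (Matrix.of fun a b => wdz (fun w => hessA u w a b) p z))) i j :=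
          Finset.sum_comm
      _ = _ := KEaux.tr2 _ _
  have h1 : Matrix.trace ((Matrix.of fun a b => wdz (fun w => (hessA u w)⁻¹ a b) p z)
        * (Matrix.of fun a b => wdz (fun w => hessA u w a b) q z))
      + Matrix.trace ((hessA u z)⁻¹
          * (Matrix.of fun a b => wdz (wdz (fun w => hessA u w a b) q) p z))
      = ((n:ℂ)+1) * hessB u z p q := by
    have hs := S4 p q
    simp only [Finset.sum_add_distrib] at hs
    rw [← KEaux.tr2, ← KEaux.tr2]
    exact hs
  rw [hLHS, hRHS1]
  exact KEaux.ALG ((hessA u z)⁻¹)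
    (Matrix.of fun a b => wdz (fun w => hessA u w a b) p z)
    (Matrix.of fun a b => wdz (fun w => hessA u w a b) q z)
    (Matrix.of fun a b => wdz (wdz (fun w => hessA u w a b) q) p z)
    (Matrix.of fun a b => wdz (fun w => (hessA u w)⁻¹ a b) p z)
    (((n:ℂ)+1) * hessB u z p q) (S5 p) h1

end
end

section
/- Let u be a smooth strictly plurisubharmonic function on an open set Ω ⊆ ℂ^n satisfying det(u_{ij̄}) = e^{(n+1)u} on Ω, set A = (u_{ij̄}), B = (u_{ij}), and for each index i define the matrix 𝓑^(i) = ∂_i B − B·(Ā)⁻¹·(∂_i Ā). Then u^{ij̄} ∂_{j̄} 𝓑^(i) = 0 on Ω (summation over i, j). -/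
open Complex Matrix
open scoped ComplexOrder

noncomputable section

section WCalc


variable {n : ℕ} {f g : (Fin n → ℂ) → ℂ} {z : Fin n → ℂ} {i j : Fin n}
  {Ω : Set (Fin n → ℂ)}


variable {n : ℕ} {f g : (Fin n → ℂ) → ℂ} {z : Fin n → ℂ} {i j : Fin n}
  {Ω : Set (Fin n → ℂ)}

lemma wdz_congr_nhds (h : f =ᶠ[nhds z] g) : wdz f i z = wdz g i z := by
  unfold wdz; rw [h.fderiv_eq]

lemma wdzbar_congr_nhds (h : f =ᶠ[nhds z] g) : wdzbar f i z = wdzbar g i z := by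
  unfold wdzbar; rw [h.fderiv_eq]

lemma wdz_congr (hΩ : IsOpen Ω) (hz : z ∈ Ω) (h : ∀ w ∈ Ω, f w = g w) :
    wdz f i z = wdz g i z :=
  wdz_congr_nhds (Filter.eventuallyEq_of_mem (hΩ.mem_nhds hz) h)

lemma wdzbar_congr (hΩ : IsOpen Ω) (hz : z ∈ Ω) (h : ∀ w ∈ Ω, f w = g w) :
    wdzbar f i z = wdzbar g i z :=
  wdzbar_congr_nhds (Filter.eventuallyEq_of_mem (hΩ.mem_nhds hz) h)

lemma wdz_const (c : ℂ) : wdz (fun _ => c) i z = 0 := by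
  unfold wdz; simp

lemma wdzbar_const (c : ℂ) : wdzbar (fun _ => c) i z = 0 := by
  unfold wdzbar; simp

lemma wdz_add (hf : DifferentiableAt ℝ f z) (hg : DifferentiableAt ℝ g z) :
    wdz (fun w => f w + g w) i z = wdz f i z + wdz g i z := by
  unfold wdz; rw [fderiv_fun_add hf hg]; simp; ring

lemma wdzbar_add (hf : DifferentiableAt ℝ f z) (hg : DifferentiableAt ℝ g z) :
    wdzbar (fun w => f w + g w) i z = wdzbar f i z + wdzbar g i z := by
  unfold wdzbar; rw [fderiv_fun_add hf hg]; simp; ring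

lemma wdz_sub (hf : DifferentiableAt ℝ f z) (hg : DifferentiableAt ℝ g z) :
    wdz (fun w => f w - g w) i z = wdz f i z - wdz g i z := by
  unfold wdz; rw [fderiv_fun_sub hf hg]; simp; ring

lemma wdzbar_sub (hf : DifferentiableAt ℝ f z) (hg : DifferentiableAt ℝ g z) :
    wdzbar (fun w => f w - g w) i z = wdzbar f i z - wdzbar g i z := by
  unfold wdzbar; rw [fderiv_fun_sub hf hg]; simp; ring

lemma wdz_mul (hf : DifferentiableAt ℝ f z) (hg : DifferentiableAt ℝ g z) :
    wdz (fun w => f w * g w) i z = f z * wdz g i z + g z * wdz f i z := by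
  unfold wdz; rw [fderiv_fun_mul hf hg]; simp [smul_eq_mul]; ring

lemma wdzbar_mul (hf : DifferentiableAt ℝ f z) (hg : DifferentiableAt ℝ g z) :
    wdzbar (fun w => f w * g w) i z = f z * wdzbar g i z + g z * wdzbar f i z := by
  unfold wdzbar; rw [fderiv_fun_mul hf hg]; simp [smul_eq_mul]; ring

lemma wdz_const_mul (c : ℂ) (hf : DifferentiableAt ℝ f z) :
    wdz (fun w => c * f w) i z = c * wdz f i z := by
  rw [wdz_mul (differentiableAt_const c) hf, wdz_const]; ring

lemma wdzbar_const_mul (c : ℂ) (hf : DifferentiableAt ℝ f z) :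
    wdzbar (fun w => c * f w) i z = c * wdzbar f i z := by
  rw [wdzbar_mul (differentiableAt_const c) hf, wdzbar_const]; ring

lemma wdz_sum {ι : Type*} (s : Finset ι) (F : ι → (Fin n → ℂ) → ℂ)
    (h : ∀ a ∈ s, DifferentiableAt ℝ (F a) z) :
    wdz (fun w => ∑ a ∈ s, F a w) i z = ∑ a ∈ s, wdz (F a) i z := by
  unfold wdz; rw [fderiv_fun_sum h]; simp only [ContinuousLinearMap.sum_apply, Finset.mul_sum, ← Finset.sum_sub_distrib, Finset.sum_div]

lemma wdzbar_sum {ι : Type*} (s : Finset ι) (F : ι → (Fin n → ℂ) → ℂ)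
    (h : ∀ a ∈ s, DifferentiableAt ℝ (F a) z) :
    wdzbar (fun w => ∑ a ∈ s, F a w) i z = ∑ a ∈ s, wdzbar (F a) i z := by
  unfold wdzbar; rw [fderiv_fun_sum h]; simp only [ContinuousLinearMap.sum_apply, Finset.mul_sum, ← Finset.sum_add_distrib, Finset.sum_div]


lemma diffAt {F : Type*} [NormedAddCommGroup F] [NormedSpace ℝ F] {f : (Fin n → ℂ) → F}
    (hΩ : IsOpen Ω) (hf : ContDiffOn ℝ (⊤:ℕ∞) f Ω) (hz : z ∈ Ω) :
    DifferentiableAt ℝ f z :=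
  (hf.contDiffAt (hΩ.mem_nhds hz)).differentiableAt (by norm_cast)

lemma contDiffOn_fderiv (hΩ : IsOpen Ω) (hf : ContDiffOn ℝ (⊤:ℕ∞) f Ω) :
    ContDiffOn ℝ (⊤:ℕ∞) (fderiv ℝ f) Ω :=
  hf.fderiv_of_isOpen hΩ (by norm_cast)

lemma fderiv_clm_apply_const (hF : DifferentiableAt ℝ (fderiv ℝ f) z) (d e : Fin n → ℂ) :
    fderiv ℝ (fun w => fderiv ℝ f w e) z d = fderiv ℝ (fderiv ℝ f) z d e := by
  have h := ((ContinuousLinearMap.apply ℝ ℂ e).hasFDerivAt.comp z hF.hasFDerivAt).fderiv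
  have h2 : (⇑((ContinuousLinearMap.apply ℝ ℂ) e) ∘ fderiv ℝ f)
      = fun w => fderiv ℝ f w e := rfl
  rw [h2] at h
  rw [h]; rfl


lemma diffAt_wdz_part (hΩ : IsOpen Ω) (hf : ContDiffOn ℝ (⊤:ℕ∞) f Ω) (hz : z ∈ Ω)
    (e : Fin n → ℂ) : DifferentiableAt ℝ (fun w => fderiv ℝ f w e) z := by
  have hF := diffAt hΩ (contDiffOn_fderiv hΩ hf) hz
  exact ((ContinuousLinearMap.apply ℝ ℂ e).hasFDerivAt.comp z hF.hasFDerivAt).differentiableAt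

lemma contDiffOn_wdz (hΩ : IsOpen Ω) (hf : ContDiffOn ℝ (⊤:ℕ∞) f Ω) (i : Fin n) :
    ContDiffOn ℝ (⊤:ℕ∞) (wdz f i) Ω := by
  have hF := contDiffOn_fderiv hΩ hf
  have h1 : ContDiffOn ℝ (⊤:ℕ∞) (fun w => fderiv ℝ f w (Pi.single i 1)) Ω :=
    hF.clm_apply contDiffOn_const
  have h2 : ContDiffOn ℝ (⊤:ℕ∞) (fun w => fderiv ℝ f w (Pi.single i Complex.I)) Ω :=
    hF.clm_apply contDiffOn_const
  exact (h1.sub (contDiffOn_const.mul h2)).div_const 2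

lemma contDiffOn_wdzbar (hΩ : IsOpen Ω) (hf : ContDiffOn ℝ (⊤:ℕ∞) f Ω) (i : Fin n) :
    ContDiffOn ℝ (⊤:ℕ∞) (wdzbar f i) Ω := by
  have hF := contDiffOn_fderiv hΩ hf
  have h1 : ContDiffOn ℝ (⊤:ℕ∞) (fun w => fderiv ℝ f w (Pi.single i 1)) Ω :=
    hF.clm_apply contDiffOn_const
  have h2 : ContDiffOn ℝ (⊤:ℕ∞) (fun w => fderiv ℝ f w (Pi.single i Complex.I)) Ω :=
    hF.clm_apply contDiffOn_const
  exact (h1.add (contDiffOn_const.mul h2)).div_const 2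

lemma fderiv_wdz_apply (hΩ : IsOpen Ω) (hf : ContDiffOn ℝ (⊤:ℕ∞) f Ω) (hz : z ∈ Ω)
    (d : Fin n → ℂ) :
    fderiv ℝ (wdz f j) z d =
      (fderiv ℝ (fderiv ℝ f) z d (Pi.single j 1)
        - Complex.I * fderiv ℝ (fderiv ℝ f) z d (Pi.single j Complex.I)) / 2 := by
  have hF := diffAt hΩ (contDiffOn_fderiv hΩ hf) hz
  have h1 := diffAt_wdz_part hΩ hf hz (Pi.single j 1)
  have h2 := diffAt_wdz_part hΩ hf hz (Pi.single j Complex.I)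
  have e1 : wdz f j = fun w => (2:ℂ)⁻¹ * ((fun w => fderiv ℝ f w (Pi.single j 1)) w
      + (fun w => (-Complex.I) * fderiv ℝ f w (Pi.single j Complex.I)) w) := by
    funext w; show (_ - _)/2 = _; ring
  rw [e1, fderiv_const_mul (h1.fun_add (h2.const_mul _)) _, fderiv_fun_add h1 (h2.const_mul _),
    fderiv_const_mul h2]
  simp only [ContinuousLinearMap.coe_smul', ContinuousLinearMap.coe_add',
    Pi.smul_apply, Pi.add_apply, smul_eq_mul]
  rw [fderiv_clm_apply_const hF, fderiv_clm_apply_const hF]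
  ring

lemma fderiv_wdzbar_apply (hΩ : IsOpen Ω) (hf : ContDiffOn ℝ (⊤:ℕ∞) f Ω) (hz : z ∈ Ω)
    (d : Fin n → ℂ) :
    fderiv ℝ (wdzbar f j) z d =
      (fderiv ℝ (fderiv ℝ f) z d (Pi.single j 1)
        + Complex.I * fderiv ℝ (fderiv ℝ f) z d (Pi.single j Complex.I)) / 2 := by
  have hF := diffAt hΩ (contDiffOn_fderiv hΩ hf) hz
  have h1 := diffAt_wdz_part hΩ hf hz (Pi.single j 1)
  have h2 := diffAt_wdz_part hΩ hf hz (Pi.single j Complex.I)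
  have e1 : wdzbar f j = fun w => (2:ℂ)⁻¹ * ((fun w => fderiv ℝ f w (Pi.single j 1)) w
      + (fun w => Complex.I * fderiv ℝ f w (Pi.single j Complex.I)) w) := by
    funext w; show (_ + _)/2 = _; ring
  rw [e1, fderiv_const_mul (h1.fun_add (h2.const_mul _)) _, fderiv_fun_add h1 (h2.const_mul _),
    fderiv_const_mul h2]
  simp only [ContinuousLinearMap.coe_smul', ContinuousLinearMap.coe_add',
    Pi.smul_apply, Pi.add_apply, smul_eq_mul]
  rw [fderiv_clm_apply_const hF, fderiv_clm_apply_const hF]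
  ring

lemma symmSnd (hΩ : IsOpen Ω) (hf : ContDiffOn ℝ (⊤:ℕ∞) f Ω) (hz : z ∈ Ω) (v w : Fin n → ℂ) :
    fderiv ℝ (fderiv ℝ f) z v w = fderiv ℝ (fderiv ℝ f) z w v :=
  (hf.contDiffAt (hΩ.mem_nhds hz)).isSymmSndFDerivAt
    (by simp only [minSmoothness_of_isRCLikeNormedField]; exact WithTop.coe_le_coe.mpr le_top) v w

lemma wdz_wdzbar_comm (hΩ : IsOpen Ω) (hf : ContDiffOn ℝ (⊤:ℕ∞) f Ω) (hz : z ∈ Ω) :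
    wdz (wdzbar f j) i z = wdzbar (wdz f i) j z := by
  show (fderiv ℝ (wdzbar f j) z (Pi.single i 1)
      - Complex.I * fderiv ℝ (wdzbar f j) z (Pi.single i Complex.I)) / 2
    = (fderiv ℝ (wdz f i) z (Pi.single j 1)
      + Complex.I * fderiv ℝ (wdz f i) z (Pi.single j Complex.I)) / 2
  rw [fderiv_wdzbar_apply hΩ hf hz, fderiv_wdzbar_apply hΩ hf hz,
    fderiv_wdz_apply hΩ hf hz, fderiv_wdz_apply hΩ hf hz,
    symmSnd hΩ hf hz (Pi.single i 1) (Pi.single j 1),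
    symmSnd hΩ hf hz (Pi.single i 1) (Pi.single j Complex.I),
    symmSnd hΩ hf hz (Pi.single i Complex.I) (Pi.single j 1),
    symmSnd hΩ hf hz (Pi.single i Complex.I) (Pi.single j Complex.I)]
  ring

lemma wdz_wdz_comm (hΩ : IsOpen Ω) (hf : ContDiffOn ℝ (⊤:ℕ∞) f Ω) (hz : z ∈ Ω) :
    wdz (wdz f j) i z = wdz (wdz f i) j z := by
  show (fderiv ℝ (wdz f j) z (Pi.single i 1)
      - Complex.I * fderiv ℝ (wdz f j) z (Pi.single i Complex.I)) / 2
    = (fderiv ℝ (wdz f i) z (Pi.single j 1)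
      - Complex.I * fderiv ℝ (wdz f i) z (Pi.single j Complex.I)) / 2
  rw [fderiv_wdz_apply hΩ hf hz, fderiv_wdz_apply hΩ hf hz,
    fderiv_wdz_apply hΩ hf hz, fderiv_wdz_apply hΩ hf hz,
    symmSnd hΩ hf hz (Pi.single i 1) (Pi.single j 1),
    symmSnd hΩ hf hz (Pi.single i 1) (Pi.single j Complex.I),
    symmSnd hΩ hf hz (Pi.single i Complex.I) (Pi.single j 1),
    symmSnd hΩ hf hz (Pi.single i Complex.I) (Pi.single j Complex.I)]
  ring

lemma wdzbar_wdzbar_comm (hΩ : IsOpen Ω) (hf : ContDiffOn ℝ (⊤:ℕ∞) f Ω) (hz : z ∈ Ω) :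
    wdzbar (wdzbar f j) i z = wdzbar (wdzbar f i) j z := by
  show (fderiv ℝ (wdzbar f j) z (Pi.single i 1)
      + Complex.I * fderiv ℝ (wdzbar f j) z (Pi.single i Complex.I)) / 2
    = (fderiv ℝ (wdzbar f i) z (Pi.single j 1)
      + Complex.I * fderiv ℝ (wdzbar f i) z (Pi.single j Complex.I)) / 2
  rw [fderiv_wdzbar_apply hΩ hf hz, fderiv_wdzbar_apply hΩ hf hz,
    fderiv_wdzbar_apply hΩ hf hz, fderiv_wdzbar_apply hΩ hf hz,
    symmSnd hΩ hf hz (Pi.single i 1) (Pi.single j 1),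
    symmSnd hΩ hf hz (Pi.single i 1) (Pi.single j Complex.I),
    symmSnd hΩ hf hz (Pi.single i Complex.I) (Pi.single j 1),
    symmSnd hΩ hf hz (Pi.single i Complex.I) (Pi.single j Complex.I)]
  ring

lemma wdz_prod {ι : Type*} [DecidableEq ι] (s : Finset ι) (F : ι → (Fin n → ℂ) → ℂ)
    (h : ∀ a ∈ s, DifferentiableAt ℝ (F a) z) :
    wdz (fun w => ∏ a ∈ s, F a w) i z
      = ∑ a ∈ s, (∏ b ∈ s.erase a, F b z) * wdz (F a) i z := by
  unfold wdz
  rw [fderiv_finset_prod h]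
  simp only [ContinuousLinearMap.sum_apply, ContinuousLinearMap.smul_apply, smul_eq_mul,
    Finset.mul_sum, ← Finset.sum_sub_distrib, Finset.sum_div]
  exact Finset.sum_congr rfl fun a _ => by ring

lemma wdz_det {M : (Fin n → ℂ) → Matrix (Fin n) (Fin n) ℂ}
    (h : ∀ a b, DifferentiableAt ℝ (fun w => M w a b) z) :
    wdz (fun w => (M w).det) i z
      = ∑ a, ∑ b, (M z).adjugate a b * wdz (fun w => M w b a) i z := by
  classical
  set c : Fin n → Fin n → ℂ := fun k r => wdz (fun w => M w r k) i z with hc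
  have hprodDiff : ∀ (σ : Equiv.Perm (Fin n)),
      DifferentiableAt ℝ (fun w => ∏ k, M w (σ k) k) z := fun σ =>
    (HasFDerivAt.finset_prod (fun k (_ : k ∈ Finset.univ) => (h (σ k) k).hasFDerivAt)).differentiableAt
  have e1 : wdz (fun w => (M w).det) i z
      = ∑ σ : Equiv.Perm (Fin n), (Equiv.Perm.sign σ : ℂ)
          * ∑ k, (∏ l ∈ Finset.univ.erase k, M z (σ l) l) * c k (σ k) := by
    have : (fun w => (M w).det)
        = fun w => ∑ σ : Equiv.Perm (Fin n), (Equiv.Perm.sign σ : ℂ) * ∏ k, M w (σ k) k := by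
      funext w; rw [Matrix.det_apply']
    rw [this, wdz_sum _ _ (fun σ _ => ((hprodDiff σ).const_mul _))]
    refine Finset.sum_congr rfl fun σ _ => ?_
    rw [wdz_const_mul _ (hprodDiff σ), wdz_prod _ _ (fun k _ => h (σ k) k)]
  have e2 : ∀ k : Fin n, (Matrix.updateCol (M z) k (c k)).det
      = ∑ σ : Equiv.Perm (Fin n), (Equiv.Perm.sign σ : ℂ)
          * ((∏ l ∈ Finset.univ.erase k, M z (σ l) l) * c k (σ k)) := by
    intro k
    rw [Matrix.det_apply']
    refine Finset.sum_congr rfl fun σ _ => ?_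
    rw [← Finset.mul_prod_erase Finset.univ _ (Finset.mem_univ k)]
    rw [Matrix.updateCol_self]
    have : ∀ l ∈ Finset.univ.erase k,
        (Matrix.updateCol (M z) k (c k)) (σ l) l = M z (σ l) l := fun l hl =>
      Matrix.updateCol_ne (Finset.ne_of_mem_erase hl)
    rw [Finset.prod_congr rfl this]
    ring
  have e3 : ∀ k : Fin n, (Matrix.updateCol (M z) k (c k)).det
      = ∑ b, (M z).adjugate k b * c k b := by
    intro k
    rw [← Matrix.cramer_apply, Matrix.cramer_eq_adjugate_mulVec]
    simp [Matrix.mulVec, dotProduct]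
  rw [e1]
  simp_rw [Finset.mul_sum]
  rw [Finset.sum_comm]
  exact Finset.sum_congr rfl fun k _ => by rw [← e2 k, e3 k]

lemma wdzbar_prod {ι : Type*} [DecidableEq ι] (s : Finset ι) (F : ι → (Fin n → ℂ) → ℂ)
    (h : ∀ a ∈ s, DifferentiableAt ℝ (F a) z) :
    wdzbar (fun w => ∏ a ∈ s, F a w) i z
      = ∑ a ∈ s, (∏ b ∈ s.erase a, F b z) * wdzbar (F a) i z := by
  unfold wdzbar
  rw [fderiv_finset_prod h]
  simp only [ContinuousLinearMap.sum_apply, ContinuousLinearMap.smul_apply, smul_eq_mul,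
    Finset.mul_sum, ← Finset.sum_add_distrib, Finset.sum_div]
  exact Finset.sum_congr rfl fun a _ => by ring

lemma smProd {ι : Type*} (s : Finset ι) (F : ι → (Fin n → ℂ) → ℂ)
    (h : ∀ a ∈ s, ContDiffOn ℝ (⊤:ℕ∞) (F a) Ω) :
    ContDiffOn ℝ (⊤:ℕ∞) (fun w => ∏ a ∈ s, F a w) Ω := by
  classical
  induction s using Finset.induction with
  | empty => simpa using contDiffOn_const
  | insert a s' ha ih =>
    simp only [Finset.prod_insert ha]
    exact (h a (Finset.mem_insert_self a s')).mul
      (ih fun b hb => h b (Finset.mem_insert_of_mem hb))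

lemma smDet {M : (Fin n → ℂ) → Matrix (Fin n) (Fin n) ℂ}
    (h : ∀ a b, ContDiffOn ℝ (⊤:ℕ∞) (fun w => M w a b) Ω) :
    ContDiffOn ℝ (⊤:ℕ∞) (fun w => (M w).det) Ω := by
  have e : (fun w => (M w).det)
      = fun w => ∑ σ : Equiv.Perm (Fin n), (Equiv.Perm.sign σ : ℂ) * ∏ k, M w (σ k) k := by
    funext w; rw [Matrix.det_apply']
  rw [e]
  exact ContDiffOn.sum fun σ _ =>
    contDiffOn_const.mul (smProd _ _ fun k _ => h (σ k) k)

lemma smAdj {M : (Fin n → ℂ) → Matrix (Fin n) (Fin n) ℂ}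
    (h : ∀ a b, ContDiffOn ℝ (⊤:ℕ∞) (fun w => M w a b) Ω) (a b : Fin n) :
    ContDiffOn ℝ (⊤:ℕ∞) (fun w => (M w).adjugate a b) Ω := by
  classical
  have e : (fun w => (M w).adjugate a b)
      = fun w => ((M w).updateRow b (Pi.single a 1)).det := by
    funext w; rw [Matrix.adjugate_apply]
  rw [e]
  apply smDet
  intro p q
  rcases eq_or_ne p b with hp | hp
  · have : (fun w => (M w).updateRow b (Pi.single a 1) p q)
        = fun _ => (Pi.single a 1 : Fin n → ℂ) q := by
      funext w; rw [hp, Matrix.updateRow_self]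
    rw [this]; exact contDiffOn_const
  · have : (fun w => (M w).updateRow b (Pi.single a 1) p q)
        = fun w => M w p q := by
      funext w; rw [Matrix.updateRow_ne hp]
    rw [this]; exact h p q

end WCalc

section Setup

variable {n : ℕ} {Ω : Set (Fin n → ℂ)} {u : (Fin n → ℂ) → ℝ} {z : Fin n → ℂ}

lemma sm_c (hu : ContDiffOn ℝ (⊤:ℕ∞) u Ω) : ContDiffOn ℝ (⊤:ℕ∞) (cplx u) Ω :=
  Complex.ofRealCLM.contDiff.comp_contDiffOn hu

lemma smEntryA (hΩ : IsOpen Ω) (hu : ContDiffOn ℝ (⊤:ℕ∞) u Ω) (a b : Fin n) :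
    ContDiffOn ℝ (⊤:ℕ∞) (fun w => hessA u w a b) Ω :=
  contDiffOn_wdz hΩ (contDiffOn_wdzbar hΩ (sm_c hu) b) a

lemma smEntryB (hΩ : IsOpen Ω) (hu : ContDiffOn ℝ (⊤:ℕ∞) u Ω) (a b : Fin n) :
    ContDiffOn ℝ (⊤:ℕ∞) (fun w => hessB u w a b) Ω :=
  contDiffOn_wdz hΩ (contDiffOn_wdz hΩ (sm_c hu) b) a

lemma hdet_ne (hKE : ∀ z ∈ Ω, (hessA u z).det = (Real.exp ((n + 1) * u z) : ℂ)) :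
    ∀ w ∈ Ω, (hessA u w).det ≠ 0 := fun w hw => by
  rw [hKE w hw]
  exact Complex.ofReal_ne_zero.mpr (Real.exp_ne_zero _)

lemma hAunit (hKE : ∀ z ∈ Ω, (hessA u z).det = (Real.exp ((n + 1) * u z) : ℂ))
    (hw : z ∈ Ω) : IsUnit (hessA u z).det :=
  isUnit_iff_ne_zero.mpr (hdet_ne hKE z hw)

lemma smS (hΩ : IsOpen Ω) (hu : ContDiffOn ℝ (⊤:ℕ∞) u Ω)
    (hKE : ∀ z ∈ Ω, (hessA u z).det = (Real.exp ((n + 1) * u z) : ℂ)) (a b : Fin n) :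
    ContDiffOn ℝ (⊤:ℕ∞) (fun w => (hessA u w)⁻¹ a b) Ω := by
  have e : (fun w => (hessA u w)⁻¹ a b)
      = fun w => ((hessA u w).det)⁻¹ * (hessA u w).adjugate a b := by
    funext w
    rw [Matrix.inv_def, Matrix.smul_apply, Ring.inverse_eq_inv', smul_eq_mul]
  rw [e]
  exact ((smDet (smEntryA hΩ hu)).inv (hdet_ne hKE)).mul (smAdj (smEntryA hΩ hu) a b)

variable (u) in
def Sf : (Fin n → ℂ) → Matrix (Fin n) (Fin n) ℂ := fun w => (hessA u w)⁻¹

lemma wdzS (hΩ : IsOpen Ω) (hu : ContDiffOn ℝ (⊤:ℕ∞) u Ω)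
    (hKE : ∀ z ∈ Ω, (hessA u z).det = (Real.exp ((n + 1) * u z) : ℂ))
    (hz : z ∈ Ω) (i a b : Fin n) :
    wdz (fun w => (hessA u w)⁻¹ a b) i z
      = -∑ k, ∑ l, (hessA u z)⁻¹ a k
          * wdz (fun w => hessA u w k l) i z * (hessA u z)⁻¹ l b := by
  have dA : ∀ p q, DifferentiableAt ℝ (fun w => hessA u w p q) z :=
    fun p q => diffAt hΩ (smEntryA hΩ hu p q) hz
  have dS : ∀ p q, DifferentiableAt ℝ (fun w => (hessA u w)⁻¹ p q) z :=
    fun p q => diffAt hΩ (smS hΩ hu hKE p q) hz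
  have key : ∀ l', ∑ k, ((hessA u z)⁻¹ a k * wdz (fun w => hessA u w k l') i z
      + hessA u z k l' * wdz (fun w => (hessA u w)⁻¹ a k) i z) = 0 := by
    intro l'
    have hfun : ∀ w ∈ Ω, (∑ k, (hessA u w)⁻¹ a k * hessA u w k l')
        = (1 : Matrix (Fin n) (Fin n) ℂ) a l' := by
      intro w hw
      rw [← Matrix.mul_apply, Matrix.nonsing_inv_mul _ (hAunit hKE hw)]
    have h0 : wdz (fun w => ∑ k, (hessA u w)⁻¹ a k * hessA u w k l') i z = 0 := by
      rw [wdz_congr hΩ hz (g := fun _ => (1 : Matrix (Fin n) (Fin n) ℂ) a l') hfun, wdz_const]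
    rw [wdz_sum _ _ (fun k _ => (dS a k).fun_mul (dA k l'))] at h0
    rw [← h0]
    exact Finset.sum_congr rfl fun k _ => by rw [wdz_mul (dS a k) (dA k l')]
  have h1 : ∑ l, (∑ k, ((hessA u z)⁻¹ a k * wdz (fun w => hessA u w k l) i z
      + hessA u z k l * wdz (fun w => (hessA u w)⁻¹ a k) i z)) * (hessA u z)⁻¹ l b = 0 := by
    simp [key]
  simp only [Finset.sum_mul, add_mul, Finset.sum_add_distrib] at h1
  have h2 : ∑ l, ∑ k, hessA u z k l * wdz (fun w => (hessA u w)⁻¹ a k) i z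
        * (hessA u z)⁻¹ l b
      = wdz (fun w => (hessA u w)⁻¹ a b) i z := by
    rw [Finset.sum_comm]
    have e1 : ∀ k, ∑ l, hessA u z k l * wdz (fun w => (hessA u w)⁻¹ a k) i z
          * (hessA u z)⁻¹ l b
        = wdz (fun w => (hessA u w)⁻¹ a k) i z
          * ((hessA u z) * (hessA u z)⁻¹) k b := by
      intro k
      rw [Matrix.mul_apply, Finset.mul_sum]
      exact Finset.sum_congr rfl fun l _ => by ring
    simp only [e1, Matrix.mul_nonsing_inv _ (hAunit hKE hz), Matrix.one_apply]
    simp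
  rw [h2] at h1
  have h4 : ∑ k, ∑ l, (hessA u z)⁻¹ a k * wdz (fun w => hessA u w k l) i z * (hessA u z)⁻¹ l b
      = ∑ l, ∑ k, (hessA u z)⁻¹ a k * wdz (fun w => hessA u w k l) i z * (hessA u z)⁻¹ l b :=
    Finset.sum_comm
  rw [h4]
  linear_combination h1

lemma wdzbarS (hΩ : IsOpen Ω) (hu : ContDiffOn ℝ (⊤:ℕ∞) u Ω)
    (hKE : ∀ z ∈ Ω, (hessA u z).det = (Real.exp ((n + 1) * u z) : ℂ))
    (hz : z ∈ Ω) (i a b : Fin n) :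
    wdzbar (fun w => (hessA u w)⁻¹ a b) i z
      = -∑ k, ∑ l, (hessA u z)⁻¹ a k
          * wdzbar (fun w => hessA u w k l) i z * (hessA u z)⁻¹ l b := by
  have dA : ∀ p q, DifferentiableAt ℝ (fun w => hessA u w p q) z :=
    fun p q => diffAt hΩ (smEntryA hΩ hu p q) hz
  have dS : ∀ p q, DifferentiableAt ℝ (fun w => (hessA u w)⁻¹ p q) z :=
    fun p q => diffAt hΩ (smS hΩ hu hKE p q) hz
  have key : ∀ l', ∑ k, ((hessA u z)⁻¹ a k * wdzbar (fun w => hessA u w k l') i z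
      + hessA u z k l' * wdzbar (fun w => (hessA u w)⁻¹ a k) i z) = 0 := by
    intro l'
    have hfun : ∀ w ∈ Ω, (∑ k, (hessA u w)⁻¹ a k * hessA u w k l')
        = (1 : Matrix (Fin n) (Fin n) ℂ) a l' := by
      intro w hw
      rw [← Matrix.mul_apply, Matrix.nonsing_inv_mul _ (hAunit hKE hw)]
    have h0 : wdzbar (fun w => ∑ k, (hessA u w)⁻¹ a k * hessA u w k l') i z = 0 := by
      rw [wdzbar_congr hΩ hz (g := fun _ => (1 : Matrix (Fin n) (Fin n) ℂ) a l') hfun,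
        wdzbar_const]
    rw [wdzbar_sum _ _ (fun k _ => (dS a k).fun_mul (dA k l'))] at h0
    rw [← h0]
    exact Finset.sum_congr rfl fun k _ => by rw [wdzbar_mul (dS a k) (dA k l')]
  have h1 : ∑ l, (∑ k, ((hessA u z)⁻¹ a k * wdzbar (fun w => hessA u w k l) i z
      + hessA u z k l * wdzbar (fun w => (hessA u w)⁻¹ a k) i z)) * (hessA u z)⁻¹ l b = 0 := by
    simp [key]
  simp only [Finset.sum_mul, add_mul, Finset.sum_add_distrib] at h1
  have h2 : ∑ l, ∑ k, hessA u z k l * wdzbar (fun w => (hessA u w)⁻¹ a k) i z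
        * (hessA u z)⁻¹ l b
      = wdzbar (fun w => (hessA u w)⁻¹ a b) i z := by
    rw [Finset.sum_comm]
    have e1 : ∀ k, ∑ l, hessA u z k l * wdzbar (fun w => (hessA u w)⁻¹ a k) i z
          * (hessA u z)⁻¹ l b
        = wdzbar (fun w => (hessA u w)⁻¹ a k) i z
          * ((hessA u z) * (hessA u z)⁻¹) k b := by
      intro k
      rw [Matrix.mul_apply, Finset.mul_sum]
      exact Finset.sum_congr rfl fun l _ => by ring
    simp only [e1, Matrix.mul_nonsing_inv _ (hAunit hKE hz), Matrix.one_apply]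
    simp
  rw [h2] at h1
  have h4 : ∑ k, ∑ l, (hessA u z)⁻¹ a k * wdzbar (fun w => hessA u w k l) i z * (hessA u z)⁻¹ l b
      = ∑ l, ∑ k, (hessA u z)⁻¹ a k * wdzbar (fun w => hessA u w k l) i z * (hessA u z)⁻¹ l b :=
    Finset.sum_comm
  rw [h4]
  linear_combination h1

lemma fderiv_cplx (hΩ : IsOpen Ω) (hu : ContDiffOn ℝ (⊤:ℕ∞) u Ω) (hz : z ∈ Ω)
    (v : Fin n → ℂ) :
    fderiv ℝ (cplx u) z v = (fderiv ℝ u z v : ℂ) := by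
  have hu' : HasFDerivAt u (fderiv ℝ u z) z := (diffAt hΩ hu hz).hasFDerivAt
  have h : HasFDerivAt (cplx u) (Complex.ofRealCLM.comp (fderiv ℝ u z)) z :=
    Complex.ofRealCLM.hasFDerivAt.comp z hu'
  rw [h.fderiv]; rfl

lemma wdz_exp_eq (hΩ : IsOpen Ω) (hu : ContDiffOn ℝ (⊤:ℕ∞) u Ω) (hz : z ∈ Ω) (q : Fin n) :
    wdz (fun w => ((Real.exp (((n:ℝ) + 1) * u w)) : ℂ)) q z
      = ((n:ℂ) + 1) * ((Real.exp (((n:ℝ) + 1) * u z)) : ℂ) * wdz (cplx u) q z := by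
  have hu' : HasFDerivAt u (fderiv ℝ u z) z := (diffAt hΩ hu hz).hasFDerivAt
  have hg : HasFDerivAt (fun w => ((n:ℝ) + 1) * u w)
      (((n:ℝ) + 1) • fderiv ℝ u z) z := hu'.const_mul _
  have he := hg.exp
  have hoc : HasFDerivAt (fun w => ((Real.exp (((n:ℝ) + 1) * u w)) : ℂ))
      (Complex.ofRealCLM.comp (Real.exp (((n:ℝ) + 1) * u z)
        • (((n:ℝ) + 1) • fderiv ℝ u z))) z :=
    Complex.ofRealCLM.hasFDerivAt.comp z he
  unfold wdz
  rw [hoc.fderiv, fderiv_cplx hΩ hu hz, fderiv_cplx hΩ hu hz]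
  simp only [ContinuousLinearMap.coe_comp', Function.comp_apply,
    ContinuousLinearMap.coe_smul', Pi.smul_apply, smul_eq_mul, Complex.ofRealCLM_apply]
  push_cast
  ring

lemma hadj (hKE : ∀ z ∈ Ω, (hessA u z).det = (Real.exp ((n + 1) * u z) : ℂ))
    (hz : z ∈ Ω) (a b : Fin n) :
    (hessA u z).adjugate a b = (hessA u z).det * (hessA u z)⁻¹ a b := by
  rw [Matrix.inv_def, Matrix.smul_apply, Ring.inverse_eq_inv', smul_eq_mul]
  field_simp [hdet_ne hKE z hz]

lemma E1 (hΩ : IsOpen Ω) (hu : ContDiffOn ℝ (⊤:ℕ∞) u Ω)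
    (hKE : ∀ z ∈ Ω, (hessA u z).det = (Real.exp ((n + 1) * u z) : ℂ))
    (hz : z ∈ Ω) (q : Fin n) :
    ∑ a, ∑ b, (hessA u z)⁻¹ a b * wdz (fun w => hessA u w b a) q z
      = ((n:ℂ) + 1) * wdz (cplx u) q z := by
  have dA : ∀ p r, DifferentiableAt ℝ (fun w => hessA u w p r) z :=
    fun p r => diffAt hΩ (smEntryA hΩ hu p r) hz
  have h1 : wdz (fun w => (hessA u w).det) q z
      = ∑ a, ∑ b, (hessA u z).adjugate a b * wdz (fun w => hessA u w b a) q z :=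
    wdz_det dA
  have h2 : wdz (fun w => (hessA u w).det) q z
      = wdz (fun w => ((Real.exp (((n:ℝ) + 1) * u w)) : ℂ)) q z := by
    refine wdz_congr hΩ hz fun w hw => ?_
    have := hKE w hw
    norm_num at this ⊢
    exact this
  rw [h2, wdz_exp_eq hΩ hu hz] at h1
  have h3 : ((Real.exp (((n:ℝ) + 1) * u z)) : ℂ) = (hessA u z).det := by
    rw [hKE z hz]
  rw [h3] at h1
  have h4 : ∑ a, ∑ b, (hessA u z).adjugate a b * wdz (fun w => hessA u w b a) q z
      = (hessA u z).det * ∑ a, ∑ b, (hessA u z)⁻¹ a b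
          * wdz (fun w => hessA u w b a) q z := by
    rw [Finset.mul_sum]
    refine Finset.sum_congr rfl fun a _ => ?_
    rw [Finset.mul_sum]
    refine Finset.sum_congr rfl fun b _ => ?_
    rw [hadj hKE hz]
    ring
  rw [h4] at h1
  exact mul_left_cancel₀ (hdet_ne hKE z hz) (by linear_combination -h1)

lemma E2 (hΩ : IsOpen Ω) (hu : ContDiffOn ℝ (⊤:ℕ∞) u Ω)
    (hKE : ∀ z ∈ Ω, (hessA u z).det = (Real.exp ((n + 1) * u z) : ℂ))
    (hz : z ∈ Ω) (p q : Fin n) :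
    ∑ a, ∑ b, ((hessA u z)⁻¹ a b * wdz (fun w => wdz (fun w' => hessA u w' b a) q w) p z
      - (∑ k, ∑ l, (hessA u z)⁻¹ a k * wdz (fun w => hessA u w k l) p z
          * (hessA u z)⁻¹ l b) * wdz (fun w => hessA u w b a) q z)
    = ((n:ℂ) + 1) * hessB u z p q := by
  have dS : ∀ a b, DifferentiableAt ℝ (fun w => (hessA u w)⁻¹ a b) z :=
    fun a b => diffAt hΩ (smS hΩ hu hKE a b) hz
  have dCA : ∀ b a, DifferentiableAt ℝ (fun w => wdz (fun w' => hessA u w' b a) q w) z :=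
    fun b a => diffAt hΩ (contDiffOn_wdz hΩ (smEntryA hΩ hu b a) q) hz
  have dprod : ∀ a, DifferentiableAt ℝ
      (fun w => ∑ b, (hessA u w)⁻¹ a b * wdz (fun w' => hessA u w' b a) q w) z := by
    intro a
    exact DifferentiableAt.fun_sum fun b _ => (dS a b).mul (dCA b a)
  have h0 : wdz (fun w => ∑ a, ∑ b, (hessA u w)⁻¹ a b
        * wdz (fun w' => hessA u w' b a) q w) p z
      = wdz (fun w => ((n:ℂ) + 1) * wdz (cplx u) q w) p z := by
    refine wdz_congr hΩ hz fun w hw => ?_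
    exact E1 hΩ hu hKE hw q
  rw [wdz_sum _ _ (fun a _ => dprod a)] at h0
  have h1 : ∀ a ∈ Finset.univ, wdz (fun w => ∑ b, (hessA u w)⁻¹ a b
        * wdz (fun w' => hessA u w' b a) q w) p z
      = ∑ b, ((hessA u z)⁻¹ a b * wdz (fun w => wdz (fun w' => hessA u w' b a) q w) p z
          + wdz (fun w' => hessA u w' b a) q z * wdz (fun w => (hessA u w)⁻¹ a b) p z) := by
    intro a _
    rw [wdz_sum _ _ (fun b _ => (dS a b).fun_mul (dCA b a))]
    exact Finset.sum_congr rfl fun b _ => wdz_mul (dS a b) (dCA b a)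
  rw [Finset.sum_congr rfl h1] at h0
  have h2 : wdz (fun w => ((n:ℂ) + 1) * wdz (cplx u) q w) p z
      = ((n:ℂ) + 1) * hessB u z p q := by
    rw [wdz_const_mul _ (diffAt hΩ (contDiffOn_wdz hΩ (sm_c hu) q) hz)]
    rfl
  rw [h2] at h0
  rw [← h0]
  refine Finset.sum_congr rfl fun a _ => Finset.sum_congr rfl fun b _ => ?_
  rw [wdzS hΩ hu hKE hz p a b]
  ring

lemma E3 (hΩ : IsOpen Ω) (hu : ContDiffOn ℝ (⊤:ℕ∞) u Ω)
    (hKE : ∀ z ∈ Ω, (hessA u z).det = (Real.exp ((n + 1) * u z) : ℂ))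
    (hz : z ∈ Ω) (m q : Fin n) :
    ∑ a, ∑ b, ((hessA u z)⁻¹ a b * wdzbar (fun w => wdz (fun w' => hessA u w' b a) q w) m z
      - (∑ k, ∑ l, (hessA u z)⁻¹ a k * wdzbar (fun w => hessA u w k l) m z
          * (hessA u z)⁻¹ l b) * wdz (fun w => hessA u w b a) q z)
    = ((n:ℂ) + 1) * hessA u z q m := by
  have dS : ∀ a b, DifferentiableAt ℝ (fun w => (hessA u w)⁻¹ a b) z :=
    fun a b => diffAt hΩ (smS hΩ hu hKE a b) hz
  have dCA : ∀ b a, DifferentiableAt ℝ (fun w => wdz (fun w' => hessA u w' b a) q w) z :=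
    fun b a => diffAt hΩ (contDiffOn_wdz hΩ (smEntryA hΩ hu b a) q) hz
  have dprod : ∀ a, DifferentiableAt ℝ
      (fun w => ∑ b, (hessA u w)⁻¹ a b * wdz (fun w' => hessA u w' b a) q w) z := by
    intro a
    exact DifferentiableAt.fun_sum fun b _ => (dS a b).mul (dCA b a)
  have h0 : wdzbar (fun w => ∑ a, ∑ b, (hessA u w)⁻¹ a b
        * wdz (fun w' => hessA u w' b a) q w) m z
      = wdzbar (fun w => ((n:ℂ) + 1) * wdz (cplx u) q w) m z := by
    refine wdzbar_congr hΩ hz fun w hw => ?_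
    exact E1 hΩ hu hKE hw q
  rw [wdzbar_sum _ _ (fun a _ => dprod a)] at h0
  have h1 : ∀ a ∈ Finset.univ, wdzbar (fun w => ∑ b, (hessA u w)⁻¹ a b
        * wdz (fun w' => hessA u w' b a) q w) m z
      = ∑ b, ((hessA u z)⁻¹ a b * wdzbar (fun w => wdz (fun w' => hessA u w' b a) q w) m z
          + wdz (fun w' => hessA u w' b a) q z
            * wdzbar (fun w => (hessA u w)⁻¹ a b) m z) := by
    intro a _
    rw [wdzbar_sum _ _ (fun b _ => (dS a b).fun_mul (dCA b a))]
    exact Finset.sum_congr rfl fun b _ => wdzbar_mul (dS a b) (dCA b a)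
  rw [Finset.sum_congr rfl h1] at h0
  have h2 : wdzbar (fun w => ((n:ℂ) + 1) * wdz (cplx u) q w) m z
      = ((n:ℂ) + 1) * hessA u z q m := by
    rw [wdzbar_const_mul _ (diffAt hΩ (contDiffOn_wdz hΩ (sm_c hu) q) hz)]
    congr 1
    have := wdz_wdzbar_comm (i := q) (j := m) hΩ (sm_c hu) hz
    rw [← this]
    rfl
  rw [h2] at h0
  rw [← h0]
  refine Finset.sum_congr rfl fun a _ => Finset.sum_congr rfl fun b _ => ?_
  rw [wdzbarS hΩ hu hKE hz m a b]
  ring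

variable (u) in
def D3 (x y s : Fin n) (z : Fin n → ℂ) : ℂ := wdz (wdz (wdzbar (cplx u) s) y) x z

variable (u) in
def D3b (x s t : Fin n) (z : Fin n → ℂ) : ℂ := wdz (wdzbar (wdzbar (cplx u) t) s) x z

variable (u) in
def D4a (x y t s : Fin n) (z : Fin n → ℂ) : ℂ :=
  wdz (wdz (wdz (wdzbar (cplx u) s) t) y) x z

variable (u) in
def D4b (x y s t : Fin n) (z : Fin n → ℂ) : ℂ :=
  wdz (wdz (wdzbar (wdzbar (cplx u) t) s) y) x z

section Convert

variable (hΩ : IsOpen Ω) (hu : ContDiffOn ℝ (⊤:ℕ∞) u Ω) (hz : z ∈ Ω)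
include hΩ hu hz

lemma C3_sym (x y s : Fin n) : D3 u x y s z = D3 u y x s z :=
  wdz_wdz_comm hΩ (contDiffOn_wdzbar hΩ (sm_c hu) s) hz

lemma V3_sym (x s t : Fin n) : D3b u x s t z = D3b u x t s z :=
  wdz_congr hΩ hz fun w hw => wdzbar_wdzbar_comm hΩ (sm_c hu) hw

lemma W4_sym12 (x y t s : Fin n) : D4a u x y t s z = D4a u y x t s z :=
  wdz_wdz_comm hΩ (contDiffOn_wdz hΩ (contDiffOn_wdzbar hΩ (sm_c hu) s) t) hz

lemma W4_sym23 (x y t s : Fin n) : D4a u x y t s z = D4a u x t y s z :=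
  wdz_congr hΩ hz fun w hw =>
    wdz_wdz_comm hΩ (contDiffOn_wdzbar hΩ (sm_c hu) s) hw

lemma V4_sym12 (x y s t : Fin n) : D4b u x y s t z = D4b u y x s t z :=
  wdz_wdz_comm hΩ (contDiffOn_wdzbar hΩ (contDiffOn_wdzbar hΩ (sm_c hu) t) s) hz

lemma V4_sym34 (x y s t : Fin n) : D4b u x y s t z = D4b u x y t s z :=
  wdz_congr hΩ hz fun w hw =>
    wdz_congr hΩ hw fun w' hw' => wdzbar_wdzbar_comm hΩ (sm_c hu) hw'

lemma convB (p l j : Fin n) :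
    wdzbar (fun w => hessB u w p l) j z = D3 u p l j z := by
  have h1 : wdzbar (fun w => hessB u w p l) j z
      = wdzbar (wdz (wdz (cplx u) l) p) j z := rfl
  rw [h1, ← wdz_wdzbar_comm hΩ (contDiffOn_wdz hΩ (sm_c hu) l) hz]
  exact wdz_congr hΩ hz fun w hw => (wdz_wdzbar_comm hΩ (sm_c hu) hw).symm

lemma convA3bar (a j b : Fin n) :
    wdzbar (fun w => hessA u w a b) j z = D3b u a j b z := by
  have h1 : wdzbar (fun w => hessA u w a b) j z
      = wdzbar (wdz (wdzbar (cplx u) b) a) j z := rfl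
  rw [h1, ← wdz_wdzbar_comm hΩ (contDiffOn_wdzbar hΩ (sm_c hu) b) hz]
  rfl

lemma convV4 (i q j k : Fin n) :
    wdzbar (fun w => wdz (fun w' => hessA u w' q k) i w) j z = D4b u i q j k z := by
  have h1 : wdzbar (fun w => wdz (fun w' => hessA u w' q k) i w) j z
      = wdzbar (wdz (wdz (wdzbar (cplx u) k) q) i) j z := rfl
  rw [h1, ← wdz_wdzbar_comm hΩ (contDiffOn_wdz hΩ (contDiffOn_wdzbar hΩ (sm_c hu) k) q) hz]
  exact wdz_congr hΩ hz fun w hw =>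
    (wdz_wdzbar_comm hΩ (contDiffOn_wdzbar hΩ (sm_c hu) k) hw).symm

lemma convW4 (i p q j : Fin n) :
    wdzbar (fun w => wdz (fun w' => hessB u w' p q) i w) j z = D4a u p q i j z := by
  have h1 : wdzbar (fun w => wdz (fun w' => hessB u w' p q) i w) j z
      = wdzbar (wdz (wdz (wdz (cplx u) q) p) i) j z := rfl
  rw [h1, ← wdz_wdzbar_comm hΩ
    (contDiffOn_wdz hΩ (contDiffOn_wdz hΩ (sm_c hu) q) p) hz]
  have e : ∀ w ∈ Ω, wdzbar (wdz (wdz (cplx u) q) p) j w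
      = wdz (wdz (wdzbar (cplx u) j) q) p w := by
    intro w hw
    rw [← wdz_wdzbar_comm hΩ (contDiffOn_wdz hΩ (sm_c hu) q) hw]
    exact wdz_congr hΩ hw fun w' hw' => (wdz_wdzbar_comm hΩ (sm_c hu) hw').symm
  rw [wdz_congr hΩ hz e]
  have h2 : wdz (wdz (wdz (wdzbar (cplx u) j) q) p) i z = D4a u i p q j z := rfl
  rw [h2, W4_sym12 hΩ hu hz, W4_sym23 hΩ hu hz]

end Convert

lemma E2D (hΩ : IsOpen Ω) (hu : ContDiffOn ℝ (⊤:ℕ∞) u Ω)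
    (hKE : ∀ z ∈ Ω, (hessA u z).det = (Real.exp ((n + 1) * u z) : ℂ))
    (hz : z ∈ Ω) (p q : Fin n) :
    ∑ a, ∑ b, ((hessA u z)⁻¹ a b * D4a u p q b a z
      - (∑ k, ∑ l, (hessA u z)⁻¹ a k * D3 u p k l z * (hessA u z)⁻¹ l b) * D3 u q b a z)
    = ((n:ℂ) + 1) * hessB u z p q :=
  E2 hΩ hu hKE hz p q

lemma E3D (hΩ : IsOpen Ω) (hu : ContDiffOn ℝ (⊤:ℕ∞) u Ω)
    (hKE : ∀ z ∈ Ω, (hessA u z).det = (Real.exp ((n + 1) * u z) : ℂ))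
    (hz : z ∈ Ω) (m q : Fin n) :
    ∑ a, ∑ b, ((hessA u z)⁻¹ a b * D4b u q b m a z
      - (∑ k, ∑ l, (hessA u z)⁻¹ a k * D3b u k m l z * (hessA u z)⁻¹ l b) * D3 u q b a z)
    = ((n:ℂ) + 1) * hessA u z q m := by
  have h := E3 hΩ hu hKE hz m q
  rw [← h]
  refine Finset.sum_congr rfl fun a _ => Finset.sum_congr rfl fun b _ => ?_
  rw [convV4 hΩ hu hz]
  congr 2
  refine Finset.sum_congr rfl fun k _ => Finset.sum_congr rfl fun l _ => ?_
  rw [convA3bar hΩ hu hz]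

lemma mconj_entry (hpsh : ∀ z ∈ Ω, (hessA u z).PosDef) {w : Fin n → ℂ} (hw : w ∈ Ω)
    (k q : Fin n) : mconj (hessA u w) k q = hessA u w q k := by
  have h := (hpsh w hw).1
  have h2 := congrFun (congrFun h q) k
  rw [Matrix.conjTranspose_apply] at h2
  exact h2.symm ▸ rfl

lemma mconj_inv (hpsh : ∀ z ∈ Ω, (hessA u z).PosDef) {w : Fin n → ℂ} (hw : w ∈ Ω) :
    (mconj (hessA u w))⁻¹ = ((hessA u w)⁻¹)ᵀ := by
  have h : mconj (hessA u w) = (hessA u w)ᵀ := by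
    ext k q
    rw [mconj_entry hpsh hw, Matrix.transpose_apply]
  rw [h, Matrix.transpose_nonsing_inv]

lemma entryExpand (hΩ : IsOpen Ω) (hu : ContDiffOn ℝ (⊤:ℕ∞) u Ω)
    (hKE : ∀ z ∈ Ω, (hessA u z).det = (Real.exp ((n + 1) * u z) : ℂ))
    (hpsh : ∀ z ∈ Ω, (hessA u z).PosDef)
    (hz : z ∈ Ω) (i j p q : Fin n) :
    wdzbar (fun w =>
        (mwdz (hessB u) i w - hessB u w * (mconj (hessA u w))⁻¹ *
          mwdz (fun w' => mconj (hessA u w')) i w) p q) j z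
    = D4a u p q i j z
      - ∑ k, ∑ l, (hessB u z p l * (hessA u z)⁻¹ k l * D4b u i q j k z
          + D3 u i q k z * (hessB u z p l
              * (-∑ r, ∑ s, (hessA u z)⁻¹ k r * D3b u r j s z * (hessA u z)⁻¹ s l)
            + (hessA u z)⁻¹ k l * D3 u p l j z)) := by
  have dB : ∀ a b, DifferentiableAt ℝ (fun w => hessB u w a b) z :=
    fun a b => diffAt hΩ (smEntryB hΩ hu a b) hz
  have dS : ∀ a b, DifferentiableAt ℝ (fun w => (hessA u w)⁻¹ a b) z :=
    fun a b => diffAt hΩ (smS hΩ hu hKE a b) hz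
  have dC : ∀ a b, DifferentiableAt ℝ (fun w => wdz (fun w' => hessA u w' a b) i w) z :=
    fun a b => diffAt hΩ (contDiffOn_wdz hΩ (smEntryA hΩ hu a b) i) hz
  have dW : DifferentiableAt ℝ (fun w => wdz (fun w' => hessB u w' p q) i w) z :=
    diffAt hΩ (contDiffOn_wdz hΩ (smEntryB hΩ hu p q) i) hz
  -- Step 1: rewrite the integrand on Ω
  have hcongr : ∀ w ∈ Ω,
      (mwdz (hessB u) i w - hessB u w * (mconj (hessA u w))⁻¹ *
        mwdz (fun w' => mconj (hessA u w')) i w) p q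
      = wdz (fun w' => hessB u w' p q) i w
        - ∑ k, ∑ l, hessB u w p l * (hessA u w)⁻¹ k l
            * wdz (fun w' => hessA u w' q k) i w := by
    intro w hw
    rw [Matrix.sub_apply]
    congr 1
    rw [Matrix.mul_apply]
    have hZ : ∀ k, mwdz (fun w' => mconj (hessA u w')) i w k q
        = wdz (fun w' => hessA u w' q k) i w := by
      intro k
      show wdz (fun w' => mconj (hessA u w') k q) i w = _
      exact wdz_congr hΩ hw fun w' hw' => mconj_entry hpsh hw' k q
    have hXY : ∀ k, (hessB u w * (mconj (hessA u w))⁻¹) p k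
        = ∑ l, hessB u w p l * (hessA u w)⁻¹ k l := by
      intro k
      rw [Matrix.mul_apply, mconj_inv hpsh hw]
      exact Finset.sum_congr rfl fun l _ => by rw [Matrix.transpose_apply]
    calc ∑ k, (hessB u w * (mconj (hessA u w))⁻¹) p k
          * mwdz (fun w' => mconj (hessA u w')) i w k q
        = ∑ k, (∑ l, hessB u w p l * (hessA u w)⁻¹ k l)
            * wdz (fun w' => hessA u w' q k) i w := by
          exact Finset.sum_congr rfl fun k _ => by rw [hZ k, hXY k]
      _ = ∑ k, ∑ l, hessB u w p l * (hessA u w)⁻¹ k l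
            * wdz (fun w' => hessA u w' q k) i w := by
          exact Finset.sum_congr rfl fun k _ => by rw [Finset.sum_mul]
  rw [wdzbar_congr hΩ hz hcongr]
  -- Step 2: expand the derivative
  have dsum : DifferentiableAt ℝ (fun w => ∑ k, ∑ l, hessB u w p l * (hessA u w)⁻¹ k l
      * wdz (fun w' => hessA u w' q k) i w) z := by
    refine DifferentiableAt.fun_sum fun k _ => DifferentiableAt.fun_sum fun l _ => ?_
    exact ((dB p l).mul (dS k l)).mul (dC q k)
  rw [wdzbar_sub dW dsum]
  rw [convW4 hΩ hu hz]
  congr 1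
  rw [wdzbar_sum _ _ (fun k _ => DifferentiableAt.fun_sum
    (fun l _ => ((dB p l).fun_mul (dS k l)).fun_mul (dC q k)))]
  refine Finset.sum_congr rfl fun k _ => ?_
  rw [wdzbar_sum _ _ (fun l _ => ((dB p l).fun_mul (dS k l)).fun_mul (dC q k))]
  refine Finset.sum_congr rfl fun l _ => ?_
  rw [wdzbar_mul ((dB p l).fun_mul (dS k l)) (dC q k),
    wdzbar_mul (dB p l) (dS k l)]
  rw [convV4 hΩ hu hz, convB hΩ hu hz]
  rw [wdzbarS hΩ hu hKE hz j k l]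
  have hsub : ∑ r, ∑ s, (hessA u z)⁻¹ k r * wdzbar (fun w => hessA u w r s) j z
        * (hessA u z)⁻¹ s l
      = ∑ r, ∑ s, (hessA u z)⁻¹ k r * D3b u r j s z * (hessA u z)⁻¹ s l := by
    refine Finset.sum_congr rfl fun r _ => Finset.sum_congr rfl fun s _ => ?_
    rw [convA3bar hΩ hu hz]
  rw [hsub]
  have hD3 : wdz (fun w' => hessA u w' q k) i z = D3 u i q k z := rfl
  rw [hD3]

lemma flat4 {M : Type*} [AddCommMonoid M] (F : Fin n × Fin n × Fin n × Fin n → M) :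
    ∑ x : Fin n × Fin n × Fin n × Fin n, F x
      = ∑ i, ∑ j, ∑ k, ∑ l, F (i, j, k, l) := by
  rw [Fintype.sum_prod_type]
  refine Finset.sum_congr rfl fun i _ => ?_
  rw [Fintype.sum_prod_type]
  refine Finset.sum_congr rfl fun j _ => ?_
  rw [Fintype.sum_prod_type]

lemma flat6 {M : Type*} [AddCommMonoid M]
    (F : Fin n × Fin n × Fin n × Fin n × Fin n × Fin n → M) :
    ∑ x : Fin n × Fin n × Fin n × Fin n × Fin n × Fin n, F x
      = ∑ i, ∑ j, ∑ k, ∑ l, ∑ r, ∑ s, F (i, j, k, l, r, s) := by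
  rw [Fintype.sum_prod_type]
  refine Finset.sum_congr rfl fun i _ => ?_
  rw [Fintype.sum_prod_type]
  refine Finset.sum_congr rfl fun j _ => ?_
  rw [Fintype.sum_prod_type]
  refine Finset.sum_congr rfl fun k _ => ?_
  rw [Fintype.sum_prod_type]
  refine Finset.sum_congr rfl fun l _ => ?_
  rw [Fintype.sum_prod_type]

lemma perm4a (W : Fin n → Fin n → Fin n → Fin n → ℂ) :
    ∑ i, ∑ j, ∑ k, ∑ l, W k i l j = ∑ i, ∑ j, ∑ k, ∑ l, W i j k l := by
  rw [← flat4 (fun x => W x.2.2.1 x.1 x.2.2.2 x.2.1), ← flat4 (fun x => W x.1 x.2.1 x.2.2.1 x.2.2.2)]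
  exact Fintype.sum_equiv
    ⟨fun x => (x.2.2.1, x.1, x.2.2.2, x.2.1), fun y => (y.2.1, y.2.2.2, y.1, y.2.2.1),
      fun x => rfl, fun y => rfl⟩ _ _ (fun x => rfl)

lemma perm4b (W : Fin n → Fin n → Fin n → Fin n → ℂ) :
    ∑ i, ∑ j, ∑ k, ∑ l, W k l i j = ∑ i, ∑ j, ∑ k, ∑ l, W i j k l := by
  rw [← flat4 (fun x => W x.2.2.1 x.2.2.2 x.1 x.2.1), ← flat4 (fun x => W x.1 x.2.1 x.2.2.1 x.2.2.2)]
  exact Fintype.sum_equiv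
    ⟨fun x => (x.2.2.1, x.2.2.2, x.1, x.2.1), fun y => (y.2.2.1, y.2.2.2, y.1, y.2.1),
      fun x => rfl, fun y => rfl⟩ _ _ (fun x => rfl)

lemma perm6a (W : Fin n → Fin n → Fin n → Fin n → Fin n → Fin n → ℂ) :
    ∑ i, ∑ j, ∑ k, ∑ l, ∑ r, ∑ s, W s l k i r j
      = ∑ i, ∑ j, ∑ k, ∑ l, ∑ r, ∑ s, W i j k l r s := by
  rw [← flat6 (fun x => W x.2.2.2.2.2 x.2.2.2.1 x.2.2.1 x.1 x.2.2.2.2.1 x.2.1),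
    ← flat6 (fun x => W x.1 x.2.1 x.2.2.1 x.2.2.2.1 x.2.2.2.2.1 x.2.2.2.2.2)]
  exact Fintype.sum_equiv
    ⟨fun x => (x.2.2.2.2.2, x.2.2.2.1, x.2.2.1, x.1, x.2.2.2.2.1, x.2.1),
      fun y => (y.2.2.2.1, y.2.2.2.2.2, y.2.2.1, y.2.1, y.2.2.2.2.1, y.1),
      fun x => rfl, fun y => rfl⟩ _ _ (fun x => rfl)

theorem trace_main (hΩ : IsOpen Ω) (hu : ContDiffOn ℝ (⊤:ℕ∞) u Ω)
    (hpsh : ∀ z ∈ Ω, (hessA u z).PosDef)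
    (hKE : ∀ z ∈ Ω, (hessA u z).det = (Real.exp ((n + 1) * u z) : ℂ))
    (hz : z ∈ Ω) (p q : Fin n) :
    ∑ i, ∑ j, (hessA u z)⁻¹ j i *
        wdzbar (fun w =>
          (mwdz (hessB u) i w -
            hessB u w * (mconj (hessA u w))⁻¹ *
              mwdz (fun w' => mconj (hessA u w')) i w) p q) j z
      = 0 := by
  classical
  -- abbreviations (notation only)
  set S : Fin n → Fin n → ℂ := fun a b => (hessA u z)⁻¹ a b with hS
  set B : Fin n → Fin n → ℂ := fun a b => hessB u z a b with hB
  -- rewrite each entry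
  have hkey : ∀ i j : Fin n,
      wdzbar (fun w =>
        (mwdz (hessB u) i w - hessB u w * (mconj (hessA u w))⁻¹ *
          mwdz (fun w' => mconj (hessA u w')) i w) p q) j z
      = D4a u p q i j z
        - ∑ k, ∑ l, (B p l * S k l * D4b u i q j k z
            + D3 u i q k z * (B p l
                * (-∑ r, ∑ s, S k r * D3b u r j s z * S s l)
              + S k l * D3 u p l j z)) := fun i j =>
    entryExpand hΩ hu hKE hpsh hz i j p q
  rw [Finset.sum_congr rfl fun i _ => Finset.sum_congr rfl fun j _ => by rw [hkey i j]]
  -- split into four blocks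
  have point : ∀ i j : Fin n,
      S j i * (D4a u p q i j z
        - ∑ k, ∑ l, (B p l * S k l * D4b u i q j k z
            + D3 u i q k z * (B p l
                * (-∑ r, ∑ s, S k r * D3b u r j s z * S s l)
              + S k l * D3 u p l j z)))
      = S j i * D4a u p q i j z
        - (∑ k, ∑ l, S j i * (B p l * S k l * D4b u i q j k z))
        + (∑ k, ∑ l, ∑ r, ∑ s, S j i * D3 u i q k z
            * (B p l * (S k r * D3b u r j s z * S s l)))
        - (∑ k, ∑ l, S j i * D3 u i q k z * (S k l * D3 u p l j z)) := by
    intro i j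
    rw [mul_sub, Finset.mul_sum]
    have e : ∀ k ∈ (Finset.univ : Finset (Fin n)),
        S j i * (∑ l, (B p l * S k l * D4b u i q j k z
            + D3 u i q k z * (B p l
                * (-∑ r, ∑ s, S k r * D3b u r j s z * S s l)
              + S k l * D3 u p l j z)))
        = ∑ l, (S j i * (B p l * S k l * D4b u i q j k z)
            + S j i * D3 u i q k z * (S k l * D3 u p l j z)
            - ∑ r, ∑ s, S j i * D3 u i q k z
                * (B p l * (S k r * D3b u r j s z * S s l))) := by
      intro k _
      rw [Finset.mul_sum]
      refine Finset.sum_congr rfl fun l _ => ?_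
      have hmul : (S j i * D3 u i q k z * B p l)
            * (∑ r, ∑ s, S k r * D3b u r j s z * S s l)
          = ∑ r, ∑ s, S j i * D3 u i q k z
              * (B p l * (S k r * D3b u r j s z * S s l)) := by
        rw [Finset.mul_sum]
        refine Finset.sum_congr rfl fun r _ => ?_
        rw [Finset.mul_sum]
        exact Finset.sum_congr rfl fun s _ => by ring
      linear_combination -hmul
    rw [Finset.sum_congr rfl e]
    simp only [Finset.sum_add_distrib, Finset.sum_sub_distrib]
    ring
  rw [Finset.sum_congr rfl fun i _ => Finset.sum_congr rfl fun j _ => point i j]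
  simp only [Finset.sum_add_distrib, Finset.sum_sub_distrib]
  -- Block identities
  have hT1T2 : (∑ i, ∑ j, S j i * D4a u p q i j z)
      - (∑ i, ∑ j, ∑ k, ∑ l, S j i * D3 u i q k z * (S k l * D3 u p l j z))
      = ((n:ℂ) + 1) * hessB u z p q := by
    have e2 := E2D hΩ hu hKE hz p q
    have h1 : ∑ i, ∑ j, S j i * D4a u p q i j z
        = ∑ a, ∑ b, S a b * D4a u p q b a z := Finset.sum_comm
    have h2 : ∑ i, ∑ j, ∑ k, ∑ l, S j i * D3 u i q k z * (S k l * D3 u p l j z)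
        = ∑ a, ∑ b, (∑ k, ∑ l, S a k * D3 u p k l z * S l b) * D3 u q b a z := by
      have hL : ∑ i, ∑ j, ∑ k, ∑ l, S j i * D3 u i q k z * (S k l * D3 u p l j z)
          = ∑ i, ∑ j, ∑ k, ∑ l,
              (fun a b c d => S a c * D3 u p c d z * S d b * D3 u q b a z) k i l j := by
        refine Finset.sum_congr rfl fun i _ => Finset.sum_congr rfl fun j _ =>
          Finset.sum_congr rfl fun k _ => Finset.sum_congr rfl fun l _ => ?_
        simp only []
        rw [C3_sym hΩ hu hz i q k]
        ring
      rw [hL, perm4a]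
      refine Finset.sum_congr rfl fun a _ => Finset.sum_congr rfl fun b _ => ?_
      rw [Finset.sum_mul]
      refine Finset.sum_congr rfl fun k _ => ?_
      rw [Finset.sum_mul]
    rw [h1, h2, ← Finset.sum_sub_distrib]
    rw [← e2]
    refine Finset.sum_congr rfl fun a _ => ?_
    rw [← Finset.sum_sub_distrib]
  have hT4T3 : (∑ i, ∑ j, ∑ k, ∑ l, S j i * (B p l * S k l * D4b u i q j k z))
      = ((n:ℂ) + 1) * hessB u z p q
        + (∑ i, ∑ j, ∑ k, ∑ l, ∑ r, ∑ s, S j i * D3 u i q k z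
            * (B p l * (S k r * D3b u r j s z * S s l))) := by
    -- reorder T4
    have h1 : ∑ i, ∑ j, ∑ k, ∑ l, S j i * (B p l * S k l * D4b u i q j k z)
        = ∑ a, ∑ b, ∑ c, ∑ d, S d c * (B p b * S a b * D4b u c q d a z) := by
      rw [← perm4b (fun a b c d => S d c * (B p b * S a b * D4b u c q d a z))]
    rw [h1]
    -- inner contraction via E3D
    have hinner : ∀ a : Fin n, ∑ c, ∑ d, S d c * D4b u c q d a z
        = ((n:ℂ) + 1) * hessA u z q a
          + ∑ x, ∑ y, (∑ k, ∑ l, S x k * D3b u k a l z * S l y) * D3 u q y x z := by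
      intro a
      have e3 := E3D hΩ hu hKE hz a q
      have hcomm : ∑ c, ∑ d, S d c * D4b u c q d a z
          = ∑ x, ∑ y, S x y * D4b u q y a x z := by
        rw [Finset.sum_comm]
        refine Finset.sum_congr rfl fun x _ => Finset.sum_congr rfl fun y _ => ?_
        rw [V4_sym12 hΩ hu hz, V4_sym34 hΩ hu hz]
      rw [hcomm]
      have hsplit : ∑ x, ∑ y, (S x y * D4b u q y a x z
          - (∑ k, ∑ l, S x k * D3b u k a l z * S l y) * D3 u q y x z)
          = (∑ x, ∑ y, S x y * D4b u q y a x z)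
            - ∑ x, ∑ y, (∑ k, ∑ l, S x k * D3b u k a l z * S l y) * D3 u q y x z := by
        rw [← Finset.sum_sub_distrib]
        exact Finset.sum_congr rfl fun x _ => Finset.sum_sub_distrib _ _
      rw [hsplit] at e3
      linear_combination e3
    -- expand and contract
    have h2 : ∑ a, ∑ b, ∑ c, ∑ d, S d c * (B p b * S a b * D4b u c q d a z)
        = ∑ a, ∑ b, B p b * S a b * (∑ c, ∑ d, S d c * D4b u c q d a z) := by
      refine Finset.sum_congr rfl fun a _ => Finset.sum_congr rfl fun b _ => ?_
      rw [Finset.mul_sum]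
      refine Finset.sum_congr rfl fun c _ => ?_
      rw [Finset.mul_sum]
      exact Finset.sum_congr rfl fun d _ => by ring
    rw [h2]
    rw [Finset.sum_congr rfl fun a _ => Finset.sum_congr rfl fun b _ => by rw [hinner a]]
    simp only [mul_add, Finset.sum_add_distrib]
    congr 1
    · -- first piece equals (n+1) * B p q
      have h3 : ∑ a, ∑ b, B p b * S a b * (((n:ℂ) + 1) * hessA u z q a)
          = ((n:ℂ) + 1) * ∑ b, B p b * ∑ a, hessA u z q a * S a b := by
        conv_rhs => rw [Finset.mul_sum]
        rw [Finset.sum_comm]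
        refine Finset.sum_congr rfl fun b _ => ?_
        rw [Finset.mul_sum, Finset.mul_sum]
        exact Finset.sum_congr rfl fun a _ => by ring
      rw [h3]
      have h4 : ∀ b, ∑ a, hessA u z q a * S a b
          = (hessA u z * (hessA u z)⁻¹) q b := fun b => (Matrix.mul_apply).symm
      simp only [h4, Matrix.mul_nonsing_inv _ (hAunit hKE hz), Matrix.one_apply]
      simp only [mul_ite, mul_one, mul_zero, Finset.sum_ite_eq, Finset.mem_univ, if_true]
      try rfl
    · -- second piece equals T3
      have hpoint : ∀ a b : Fin n, B p b * S a b
            * (∑ x, ∑ y, (∑ k, ∑ l, S x k * D3b u k a l z * S l y) * D3 u q y x z)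
          = ∑ x, ∑ y, ∑ k, ∑ l, B p b * S a b
              * (S x k * D3b u k a l z * S l y * D3 u q y x z) := by
        intro a b
        rw [Finset.mul_sum]
        refine Finset.sum_congr rfl fun x _ => ?_
        rw [Finset.mul_sum]
        refine Finset.sum_congr rfl fun y _ => ?_
        rw [show (∑ k, ∑ l, S x k * D3b u k a l z * S l y) * D3 u q y x z
            = ∑ k, ∑ l, (S x k * D3b u k a l z * S l y * D3 u q y x z) from by
          rw [Finset.sum_mul]
          exact Finset.sum_congr rfl fun k _ => Finset.sum_mul _ _ _]
        rw [Finset.mul_sum]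
        refine Finset.sum_congr rfl fun k _ => ?_
        rw [Finset.mul_sum]
      rw [Finset.sum_congr rfl fun a _ => Finset.sum_congr rfl fun b _ => hpoint a b]
      -- now a 6-fold sum; reindex
      have hE : ∑ a, ∑ b, ∑ x, ∑ y, ∑ k, ∑ l, B p b * S a b
            * (S x k * D3b u k a l z * S l y * D3 u q y x z)
          = ∑ i, ∑ j, ∑ k, ∑ l, ∑ r, ∑ s,
              (fun a b x y c d => B p b * S a b
                * (S x c * D3b u c a d z * S d y * D3 u q y x z)) i j k l r s :=
        Finset.sum_congr rfl fun i _ => Finset.sum_congr rfl fun j _ =>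
          Finset.sum_congr rfl fun k _ => Finset.sum_congr rfl fun l _ =>
          Finset.sum_congr rfl fun r _ => Finset.sum_congr rfl fun s _ => rfl
      rw [hE, ← perm6a (fun a b x y c d => B p b * S a b
          * (S x c * D3b u c a d z * S d y * D3 u q y x z))]
      refine (Finset.sum_congr rfl fun i _ => Finset.sum_congr rfl fun j _ =>
          Finset.sum_congr rfl fun k _ => Finset.sum_congr rfl fun l _ =>
          Finset.sum_congr rfl fun r _ => Finset.sum_congr rfl fun s _ => ?_).symm
      show S j i * D3 u i q k z * (B p l * (S k r * D3b u r j s z * S s l))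
          = B p l * S s l * (S k r * D3b u r s j z * S j i * D3 u q i k z)
      rw [C3_sym hΩ hu hz i q k, V3_sym hΩ hu hz r j s]
      ring
  rw [hT4T3]
  linear_combination hT1T2

end Setup

theorem trace_dbar_scrB_eq_zero (n : ℕ) (Ω : Set (Fin n → ℂ)) (hΩ : IsOpen Ω)
    (u : (Fin n → ℂ) → ℝ) (hu : ContDiffOn ℝ (⊤ : ℕ∞) u Ω)
    (hpsh : ∀ z ∈ Ω, (hessA u z).PosDef)
    (hKE : ∀ z ∈ Ω, (hessA u z).det = (Real.exp ((n + 1) * u z) : ℂ)) :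
    ∀ z ∈ Ω,
      ∑ i, ∑ j, uInv u z i j •
          mwdzbar (fun w =>
            mwdz (hessB u) i w -
              hessB u w * (mconj (hessA u w))⁻¹ *
                mwdz (fun w' => mconj (hessA u w')) i w) j z
        = 0 := by
  intro z hz
  ext p q
  simp only [Matrix.sum_apply, Matrix.smul_apply, smul_eq_mul, Matrix.zero_apply]
  exact trace_main hΩ hu hpsh hKE hz p q

end
end

section
/- Let u be a smooth strictly plurisubharmonic function on an open set Ω ⊆ ℂ^n satisfying det(u_{ij̄}) = e^{(n+1)u} on Ω, and let v = e^{-u}. Then at every point of Ω the (n+1)×(n+1) bordered complex Hessian determinant of v equals (−1)^n: det [[v, v_{j̄}],[v_i, v_{ij̄}]] = (−1)^n, where the matrix has (0,0)-entry v, first row (v_{1̄},…,v_{n̄}), first column (v_1,…,v_n)ᵀ, and lower-right n×n block (v_{ij̄}). -/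
open Complex Matrix
open scoped ComplexOrder

noncomputable section

/-- The bordered complex Hessian matrix of a real-valued function `v` on `ℂⁿ`. -/
def bordered {n : ℕ} (v : (Fin n → ℂ) → ℝ) (z : Fin n → ℂ) :
    Matrix (Option (Fin n)) (Option (Fin n)) ℂ :=
  Matrix.of fun i j =>
    match i, j with
    | none, none => cplx v z
    | none, some q => wdzbar (cplx v) q z
    | some p, none => wdz (cplx v) p z
    | some p, some q => wdz (wdzbar (cplx v) q) p z

section Aux

variable {n : ℕ}

/-- The real `fderiv` of `cplx u` is the coercion of the `fderiv` of `u`. -/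
lemma fderiv_cplx_apply (u : (Fin n → ℂ) → ℝ) {w : Fin n → ℂ}
    (hd : DifferentiableAt ℝ u w) (ξ : Fin n → ℂ) :
    fderiv ℝ (cplx u) w ξ = ((fderiv ℝ u w ξ : ℝ) : ℂ) := by
  have h : HasFDerivAt (cplx u) (Complex.ofRealCLM.comp (fderiv ℝ u w)) w :=
    Complex.ofRealCLM.hasFDerivAt.comp w hd.hasFDerivAt
  rw [h.fderiv]; rfl

lemma hasFDerivAt_vexp (u : (Fin n → ℂ) → ℝ) {w : Fin n → ℂ}
    (hd : DifferentiableAt ℝ u w) :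
    HasFDerivAt (fun w => Real.exp (-u w)) (Real.exp (-u w) • (-(fderiv ℝ u w))) w :=
  (hd.hasFDerivAt.neg).exp

lemma fderiv_cplx_vexp_apply (u : (Fin n → ℂ) → ℝ) {w : Fin n → ℂ}
    (hd : DifferentiableAt ℝ u w) (ξ : Fin n → ℂ) :
    fderiv ℝ (cplx (fun w => Real.exp (-u w))) w ξ
      = -(Real.exp (-u w) : ℂ) * ((fderiv ℝ u w ξ : ℝ) : ℂ) := by
  have hv := hasFDerivAt_vexp u hd
  rw [fderiv_cplx_apply _ hv.differentiableAt, hv.fderiv]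
  simp only [ContinuousLinearMap.smul_apply, ContinuousLinearMap.neg_apply, smul_eq_mul]
  push_cast
  ring

lemma wdz_cplx_vexp (u : (Fin n → ℂ) → ℝ) {w : Fin n → ℂ}
    (hd : DifferentiableAt ℝ u w) (p : Fin n) :
    wdz (cplx (fun w => Real.exp (-u w))) p w
      = -(Real.exp (-u w) : ℂ) * wdz (cplx u) p w := by
  unfold wdz
  rw [fderiv_cplx_vexp_apply u hd, fderiv_cplx_vexp_apply u hd,
    fderiv_cplx_apply u hd, fderiv_cplx_apply u hd]
  ring

lemma wdzbar_cplx_vexp (u : (Fin n → ℂ) → ℝ) {w : Fin n → ℂ}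
    (hd : DifferentiableAt ℝ u w) (q : Fin n) :
    wdzbar (cplx (fun w => Real.exp (-u w))) q w
      = -(Real.exp (-u w) : ℂ) * wdzbar (cplx u) q w := by
  unfold wdzbar
  rw [fderiv_cplx_vexp_apply u hd, fderiv_cplx_vexp_apply u hd,
    fderiv_cplx_apply u hd, fderiv_cplx_apply u hd]
  ring

/-- The key second-derivative computation for `v = e^{-u}`. -/
lemma wdz_wdzbar_vexp (Ω : Set (Fin n → ℂ)) (hΩ : IsOpen Ω)
    (u : (Fin n → ℂ) → ℝ) (hu : ContDiffOn ℝ (⊤ : ℕ∞) u Ω)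
    {z : Fin n → ℂ} (hz : z ∈ Ω) (p q : Fin n) :
    wdz (wdzbar (cplx (fun w => Real.exp (-u w))) q) p z
      = (Real.exp (-u z) : ℂ) *
          (wdz (cplx u) p z * wdzbar (cplx u) q z - hessA u z p q) := by
  have hmem : Ω ∈ nhds z := hΩ.mem_nhds hz
  have hdiff : ∀ w ∈ Ω, DifferentiableAt ℝ u w := fun w hw =>
    (hu.contDiffAt (hΩ.mem_nhds hw)).differentiableAt (by simp)
  -- the function `G = ∂_{q̄} (cplx u)`
  set G : (Fin n → ℂ) → ℂ := wdzbar (cplx u) q with hG_def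
  -- smoothness of `cplx u` at `z` and differentiability of `G` at `z`
  have hcu : ContDiffAt ℝ (⊤ : ℕ∞) (cplx u) z :=
    (Complex.ofRealCLM.contDiff.contDiffAt).comp z (hu.contDiffAt hmem)
  have hfd : ContDiffAt ℝ (⊤ : ℕ∞) (fderiv ℝ (cplx u)) z :=
    hcu.fderiv_right (by exact_mod_cast le_top)
  have hfd' : DifferentiableAt ℝ (fderiv ℝ (cplx u)) z := hfd.differentiableAt (by simp)
  have hG1 : DifferentiableAt ℝ
      (fun w => fderiv ℝ (cplx u) w (Pi.single q 1)) z :=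
    hfd'.clm_apply (differentiableAt_const _)
  have hG2 : DifferentiableAt ℝ
      (fun w => fderiv ℝ (cplx u) w (Pi.single q Complex.I)) z :=
    hfd'.clm_apply (differentiableAt_const _)
  have hG : DifferentiableAt ℝ G z := by
    have : G = fun w =>
        (fderiv ℝ (cplx u) w (Pi.single q 1)
          + Complex.I * fderiv ℝ (cplx u) w (Pi.single q Complex.I)) / 2 := rfl
    have this2 : G = fun w =>
        (fderiv ℝ (cplx u) w (Pi.single q 1)
          + Complex.I * fderiv ℝ (cplx u) w (Pi.single q Complex.I)) * (2:ℂ)⁻¹ := by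
      funext w; rw [this]; simp [div_eq_mul_inv]
    rw [this2]
    exact (hG1.add (hG2.const_mul Complex.I)).mul_const _
  -- the function `F w = -e^{-u w}` and its derivative
  have hv := hasFDerivAt_vexp u (hdiff z hz)
  have hcv : HasFDerivAt (cplx (fun w => Real.exp (-u w)))
      (Complex.ofRealCLM.comp (Real.exp (-u z) • (-(fderiv ℝ u z)))) z :=
    Complex.ofRealCLM.hasFDerivAt.comp z hv
  set F' : (Fin n → ℂ) →L[ℝ] ℂ :=
    -(Complex.ofRealCLM.comp (Real.exp (-u z) • (-(fderiv ℝ u z)))) with hF'_def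
  have hF : HasFDerivAt (fun w => -(Real.exp (-u w) : ℂ)) F' z := hcv.neg
  have hF'app : ∀ ξ, F' ξ = (Real.exp (-u z) : ℂ) * ((fderiv ℝ u z ξ : ℝ) : ℂ) := by
    intro ξ
    simp only [hF'_def, ContinuousLinearMap.neg_apply, ContinuousLinearMap.smul_apply,
      ContinuousLinearMap.comp_apply, Complex.ofRealCLM_apply, smul_eq_mul]
    push_cast
    ring
  set G' : (Fin n → ℂ) →L[ℝ] ℂ := fderiv ℝ G z with hG'_def
  have hGfd : HasFDerivAt G G' z := hG.hasFDerivAt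
  -- local equality near z
  have heq : (wdzbar (cplx (fun w => Real.exp (-u w))) q)
      =ᶠ[nhds z] fun w => -(Real.exp (-u w) : ℂ) * G w := by
    filter_upwards [hmem] with w hw
    exact wdzbar_cplx_vexp u (hdiff w hw) q
  have hFG : HasFDerivAt (fun w => -(Real.exp (-u w) : ℂ) * G w)
      ((-(Real.exp (-u z) : ℂ)) • G' + G z • F') z := hF.mul hGfd
  have hfderiv_eq : fderiv ℝ (wdzbar (cplx (fun w => Real.exp (-u w))) q) z
      = (-(Real.exp (-u z) : ℂ)) • G' + G z • F' := by
    rw [heq.fderiv_eq, hFG.fderiv]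
  -- now expand the Wirtinger derivative
  have hA : hessA u z p q = (G' (Pi.single p 1) - Complex.I * G' (Pi.single p Complex.I)) / 2 := by
    have : hessA u z p q = wdz G p z := rfl
    rw [this]
    unfold wdz
    rw [← hG'_def]
  have hb : wdz (cplx u) p z
      = (((fderiv ℝ u z (Pi.single p 1) : ℝ) : ℂ)
          - Complex.I * ((fderiv ℝ u z (Pi.single p Complex.I) : ℝ) : ℂ)) / 2 := by
    unfold wdz
    rw [fderiv_cplx_apply u (hdiff z hz), fderiv_cplx_apply u (hdiff z hz)]
  show (fderiv ℝ (wdzbar (cplx (fun w => Real.exp (-u w))) q) z (Pi.single p 1)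
      - Complex.I * fderiv ℝ (wdzbar (cplx (fun w => Real.exp (-u w))) q) z
          (Pi.single p Complex.I)) / 2 = _
  rw [hfderiv_eq, hA, hb]
  simp only [ContinuousLinearMap.add_apply, ContinuousLinearMap.smul_apply,
    smul_eq_mul, hF'app]
  ring

end Aux

theorem bordered_hessian_det_of_KE (n : ℕ) (Ω : Set (Fin n → ℂ)) (hΩ : IsOpen Ω)
    (u : (Fin n → ℂ) → ℝ) (hu : ContDiffOn ℝ (⊤ : ℕ∞) u Ω)
    (hpsh : ∀ z ∈ Ω, (hessA u z).PosDef)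
    (hKE : ∀ z ∈ Ω, (hessA u z).det = (Real.exp ((n + 1) * u z) : ℂ)) :
    ∀ z ∈ Ω, (bordered (fun w => Real.exp (-u w)) z).det = (-1 : ℂ) ^ n := by
  intro z hz
  have hdz : DifferentiableAt ℝ u z :=
    (hu.contDiffAt (hΩ.mem_nhds hz)).differentiableAt (by simp)
  set E : ℂ := (Real.exp (-u z) : ℂ) with hE_def
  set a : Fin n → ℂ := fun q => wdzbar (cplx u) q z with ha_def
  set b : Fin n → ℂ := fun p => wdz (cplx u) p z with hb_def
  set A : Matrix (Fin n) (Fin n) ℂ := hessA u z with hA_def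
  set N : Matrix (Option (Fin n)) (Option (Fin n)) ℂ :=
    Matrix.of (fun i j =>
      match i, j with
      | none, none => (1 : ℂ)
      | none, some q => -a q
      | some p, none => -b p
      | some p, some q => b p * a q - A p q) with hN_def
  have hM : bordered (fun w => Real.exp (-u w)) z = E • N := by
    ext i j
    cases i <;> cases j <;>
      simp only [bordered, Matrix.of_apply, Matrix.smul_apply, smul_eq_mul, hN_def]
    · show cplx (fun w => Real.exp (-u w)) z = E * 1
      simp [cplx, hE_def]
    · case _ q =>
        show wdzbar (cplx fun w => Real.exp (-u w)) q z = E * (-a q)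
        rw [wdzbar_cplx_vexp u hdz q]; ring
    · case _ p =>
        show wdz (cplx fun w => Real.exp (-u w)) p z = E * (-b p)
        rw [wdz_cplx_vexp u hdz p]; ring
    · case _ p q =>
        show wdz (wdzbar (cplx fun w => Real.exp (-u w)) q) p z = E * (b p * a q - A p q)
        rw [wdz_wdzbar_vexp Ω hΩ u hu hz p q]
  -- determinant of N via block decomposition
  set e : (Fin n ⊕ Unit) ≃ Option (Fin n) := (Equiv.optionEquivSumPUnit (Fin n)).symm
    with he_def
  set X : Matrix (Fin n) Unit ℂ := Matrix.of fun p _ => -b p with hX_def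
  set Y : Matrix Unit (Fin n) ℂ := Matrix.of fun _ q => -a q with hY_def
  set W : Matrix (Fin n) (Fin n) ℂ := Matrix.of fun p q => b p * a q - A p q with hW_def
  have hsub : N.submatrix e e = Matrix.fromBlocks W X Y 1 := by
    ext i j
    cases i <;> cases j <;>
      simp [hN_def, he_def, hW_def, hX_def, hY_def, Matrix.one_apply,
        Matrix.fromBlocks, Equiv.optionEquivSumPUnit]
  have hWXY : W = -A + X * Y := by
    ext p q
    simp [hW_def, hX_def, hY_def, Matrix.mul_apply, Matrix.add_apply, Matrix.neg_apply]
    ring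
  have hfact : Matrix.fromBlocks W X Y (1 : Matrix Unit Unit ℂ)
      = Matrix.fromBlocks 1 X 0 1 * Matrix.fromBlocks (-A) 0 Y 1 := by
    rw [Matrix.fromBlocks_multiply, hWXY]
    simp
  have hdetN : N.det = (-1 : ℂ) ^ n * A.det := by
    rw [← Matrix.det_submatrix_equiv_self e N, hsub, hfact, Matrix.det_mul,
      Matrix.det_fromBlocks_zero₂₁, Matrix.det_fromBlocks_zero₁₂]
    simp [Matrix.det_neg]
  have hcard : Fintype.card (Option (Fin n)) = n + 1 := by simp
  have hdetA : A.det = (Real.exp ((n + 1) * u z) : ℂ) := hKE z hz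
  have hEpow : E ^ (n + 1) * (Real.exp ((n + 1) * u z) : ℂ) = 1 := by
    have h1 : (Real.exp (-u z)) ^ (n + 1) * Real.exp (((n : ℝ) + 1) * u z) = 1 := by
      rw [← Real.exp_nat_mul, ← Real.exp_add,
        show ((n + 1 : ℕ) : ℝ) * (-u z) + ((n : ℝ) + 1) * u z = 0 by push_cast; ring,
        Real.exp_zero]
    rw [hE_def]
    exact_mod_cast h1
  rw [hM, Matrix.det_smul, hcard, hdetN, hdetA]
  calc E ^ (n + 1) * ((-1 : ℂ) ^ n * (Real.exp ((n + 1) * u z) : ℂ))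
      = (-1 : ℂ) ^ n * (E ^ (n + 1) * (Real.exp ((n + 1) * u z) : ℂ)) := by ring
    _ = (-1 : ℂ) ^ n := by rw [hEpow, mul_one]

end
end
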